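/- arXiv:1402.2029 — 8 statements merged into one kernel-verified Lean document; each statement's English description precedes it below -/
import Mathlib

section
/- For every finite simple graph G = (V,E), the sum of the curvature over all vertices equals the Euler characteristic: Σ_{x∈V} K(x) = χ(G). -/
/-!
Gauss–Bonnet for finite simple graphs:
the sum of the curvature `K(x)` over all vertices equals the Euler characteristic `χ(G)`.
-/

noncomputable section

variable {V : Type} [Fintype V] [DecidableEq V]

/-- `numCliques G k` is the number of `k`-element cliques (complete subgraphs `K_k`) of `G`. -/
noncomputable def numCliques (G : SimpleGraph V) (k : ℕ) : ℕ :=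
  letI : DecidableRel G.Adj := Classical.decRel _
  (G.cliqueFinset k).card

/-- Euler characteristic `χ(G) = Σ_{k ≥ 0} (-1)^k v_k`, where `v_k` is the number of
`(k+1)`-element cliques of `G` (the sum is finite since cliques have at most
`Fintype.card V` vertices). -/
noncomputable def eulerChar (G : SimpleGraph V) : ℤ :=
  ∑ k ∈ Finset.range (Fintype.card V), (-1 : ℤ) ^ k * numCliques G (k + 1)

/-- The curvature `K(x) = Σ_{k ≥ 0} (-1)^k V_{k-1}(x)/(k+1)`, where `V_{k-1}(x)` is the number of
`k`-element cliques of the unit sphere `S(x)` (the subgraph induced on the neighbors of `x`),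
with `V_{-1}(x) = 1` (the empty clique). -/
noncomputable def curvature (G : SimpleGraph V) (x : V) : ℚ :=
  letI : Fintype ↥(G.neighborSet x) := (Set.toFinite _).fintype
  ∑ k ∈ Finset.range (Fintype.card V + 1),
    (-1 : ℚ) ^ k * (numCliques (G.induce (G.neighborSet x)) k : ℚ) / (k + 1)

open Finset

/-- `k`-cliques of the unit sphere `S(x)` are in bijection with `(k+1)`-cliques of `G`
containing `x`. -/
lemma sphere_cliques_card (G : SimpleGraph V) [DecidableRel G.Adj]
    (x : V) [Fintype ↥(G.neighborSet x)] (k : ℕ) :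
    ((G.induce (G.neighborSet x)).cliqueFinset k).card
      = ((G.cliqueFinset (k + 1)).filter (fun s => x ∈ s)).card := by
  classical
  apply Finset.card_bij (fun c _ => insert x (c.image Subtype.val))
  · rintro c hc
    rw [SimpleGraph.mem_cliqueFinset_iff] at hc
    have hxc : x ∉ c.image Subtype.val := by
      simp only [mem_image, not_exists]
      rintro ⟨a, ha⟩ ⟨-, h⟩
      exact G.irrefl (h ▸ ha)
    have himg : G.IsNClique k (c.image Subtype.val) := by
      constructor
      · rintro a ha b hb hab
        simp only [coe_image, Set.mem_image, mem_coe] at ha hb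
        obtain ⟨a', ha', rfl⟩ := ha
        obtain ⟨b', hb', rfl⟩ := hb
        have := hc.1 ha' hb' (fun h => hab (by rw [h]))
        exact this
      · rw [card_image_of_injective _ Subtype.val_injective, hc.2]
    rw [mem_filter, SimpleGraph.mem_cliqueFinset_iff]
    refine ⟨himg.insert ?_, mem_insert_self _ _⟩
    rintro b hb
    simp only [mem_image] at hb
    obtain ⟨⟨b', hb'⟩, _, rfl⟩ := hb
    exact hb'
  · rintro c1 h1 c2 h2 he
    have hx1 : x ∉ c1.image Subtype.val := by
      simp only [mem_image, not_exists]
      rintro ⟨a, ha⟩ ⟨-, h⟩; exact G.irrefl (h ▸ ha)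
    have hx2 : x ∉ c2.image Subtype.val := by
      simp only [mem_image, not_exists]
      rintro ⟨a, ha⟩ ⟨-, h⟩; exact G.irrefl (h ▸ ha)
    have : c1.image Subtype.val = c2.image Subtype.val := by
      have := congrArg (fun s => Finset.erase s x) he
      simpa [Finset.erase_insert_of_ne, Finset.erase_eq_of_notMem, hx1, hx2,
        Finset.erase_insert hx1, Finset.erase_insert hx2] using this
    exact Finset.image_injective Subtype.val_injective this
  · rintro s hs
    rw [mem_filter, SimpleGraph.mem_cliqueFinset_iff] at hs
    obtain ⟨hclique, hxs⟩ := hs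
    have hnb : ∀ a ∈ s.erase x, a ∈ G.neighborSet x := by
      intro a ha
      have hne : a ≠ x := Finset.ne_of_mem_erase ha
      exact hclique.1 (Finset.mem_coe.2 hxs) (Finset.mem_coe.2 (Finset.mem_of_mem_erase ha))
        (Ne.symm hne)
    refine ⟨(s.erase x).attach.image (fun a => (⟨a.1, hnb a.1 a.2⟩ : G.neighborSet x)), ?_, ?_⟩
    · rw [SimpleGraph.mem_cliqueFinset_iff]
      constructor
      · rintro ⟨a, ha⟩ haa ⟨b, hb⟩ hbb hab
        simp only [coe_image, Set.mem_image, mem_coe, mem_attach, true_and,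
          Subtype.mk.injEq] at haa hbb
        obtain ⟨⟨a', ha'⟩, _, rfl⟩ := haa
        obtain ⟨⟨b', hb'⟩, _, rfl⟩ := hbb
        have hne : a' ≠ b' := by
          intro h; apply hab; simp [h]
        exact hclique.1 (Finset.mem_coe.2 (Finset.mem_of_mem_erase ha'))
          (Finset.mem_coe.2 (Finset.mem_of_mem_erase hb')) hne
      · have hinj : Function.Injective
            (fun a : {a : V // a ∈ s.erase x} => (⟨a.1, hnb a.1 a.2⟩ : G.neighborSet x)) :=
          fun a b h => Subtype.ext (Subtype.mk_eq_mk.1 h)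
        rw [Finset.card_image_of_injective _ hinj, Finset.card_attach,
          Finset.card_erase_of_mem hxs, hclique.2]
        omega
    · rw [Finset.image_image]
      have hfun : (Subtype.val ∘ fun a : {a : V // a ∈ s.erase x} =>
          (⟨a.1, hnb a.1 a.2⟩ : G.neighborSet x)) = fun a => a.1 := rfl
      rw [hfun, Finset.attach_image_val, Finset.insert_erase hxs]

lemma numCliques_eq_card (G : SimpleGraph V) [DecidableRel G.Adj] (k : ℕ) :
    numCliques G k = (G.cliqueFinset k).card := by
  unfold numCliques
  congr!

lemma cliqueFinset_card_congr {W : Type} [DecidableEq W] (G : SimpleGraph W)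
    (i1 i2 : Fintype W) (d1 d2 : DecidableRel G.Adj) (k : ℕ) :
    (@SimpleGraph.cliqueFinset W G i1 _ d1 k).card
      = (@SimpleGraph.cliqueFinset W G i2 _ d2 k).card := by
  cases Subsingleton.elim i1 i2
  cases Subsingleton.elim d1 d2
  rfl

lemma sum_sphere_cliques (G : SimpleGraph V) (k : ℕ) :
    (∑ x : V,
      (letI : Fintype ↥(G.neighborSet x) := (Set.toFinite _).fintype
       numCliques (G.induce (G.neighborSet x)) k)) = (k + 1) * numCliques G (k + 1) := by
  classical
  have h1 : ∀ x : V,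
      (letI : Fintype ↥(G.neighborSet x) := (Set.toFinite _).fintype
       numCliques (G.induce (G.neighborSet x)) k)
        = ((G.cliqueFinset (k + 1)).filter (fun s => x ∈ s)).card := by
    intro x
    exact (cliqueFinset_card_congr (G.induce (G.neighborSet x)) _ _ _ _ k).trans
      (sphere_cliques_card G x k)
  simp_rw [h1]
  rw [numCliques_eq_card]
  simp_rw [Finset.card_filter]
  rw [Finset.sum_comm]
  have h2 : ∀ s ∈ G.cliqueFinset (k + 1), (∑ x : V, if x ∈ s then 1 else 0) = k + 1 := by
    intro s hs
    rw [Finset.sum_ite_mem, Finset.univ_inter, Finset.sum_const, smul_eq_mul, mul_one,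
      (SimpleGraph.mem_cliqueFinset_iff.1 hs).2]
  rw [Finset.sum_congr rfl h2, Finset.sum_const, smul_eq_mul, Nat.mul_comm]

/-- **Gauss–Bonnet**: `Σ_{x ∈ V} K(x) = χ(G)`. -/
theorem gauss_bonnet (G : SimpleGraph V) :
    ∑ x : V, curvature G x = (eulerChar G : ℚ) := by
  classical
  unfold curvature eulerChar
  rw [Finset.sum_comm]
  have hterm : ∀ k ∈ Finset.range (Fintype.card V + 1),
      (∑ x : V,
        (letI : Fintype ↥(G.neighborSet x) := (Set.toFinite _).fintype
         (-1 : ℚ) ^ k * (numCliques (G.induce (G.neighborSet x)) k : ℚ) / (k + 1)))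
        = (-1 : ℚ) ^ k * (numCliques G (k + 1) : ℚ) := by
    intro k _
    have := sum_sphere_cliques G k
    have hcast : (∑ x : V,
        (letI : Fintype ↥(G.neighborSet x) := (Set.toFinite _).fintype
         ((numCliques (G.induce (G.neighborSet x)) k : ℚ))))
        = ((k : ℚ) + 1) * (numCliques G (k + 1) : ℚ) := by
      rw [← Nat.cast_sum]
      norm_cast
    calc (∑ x : V,
        (letI : Fintype ↥(G.neighborSet x) := (Set.toFinite _).fintype
         (-1 : ℚ) ^ k * (numCliques (G.induce (G.neighborSet x)) k : ℚ) / (k + 1)))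
        = (-1 : ℚ) ^ k * (∑ x : V,
            (letI : Fintype ↥(G.neighborSet x) := (Set.toFinite _).fintype
             ((numCliques (G.induce (G.neighborSet x)) k : ℚ)))) / (k + 1) := by
          rw [Finset.mul_sum, Finset.sum_div]
      _ = (-1 : ℚ) ^ k * (numCliques G (k + 1) : ℚ) := by
          rw [hcast]
          have hk : ((k : ℚ) + 1) ≠ 0 := by positivity
          field_simp
  rw [Finset.sum_congr rfl hterm, Finset.sum_range_succ]
  have hzero : numCliques G (Fintype.card V + 1) = 0 := by
    unfold numCliques
    rw [Finset.card_eq_zero, Finset.eq_empty_iff_forall_notMem]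
    intro s hs
    have h1 := (SimpleGraph.mem_cliqueFinset_iff.1 hs).2
    have h2 := Finset.card_le_univ s
    omega
  rw [hzero]
  push_cast
  ring
end
end

section
/- For every finite simple graph G = (V,E) and every injective function f : V → ℝ, the sum of the indices over all vertices equals the Euler characteristic: Σ_{x∈V} i_f(x) = χ(G). -/
/-!
Poincaré–Hopf for finite simple graphs: for every injective `f : V → ℝ`,
`Σ_{x ∈ V} i_f(x) = χ(G)` where `i_f(x) = 1 - χ(S_f^-(x))`.
-/

noncomputable section

variable {V : Type} [Fintype V] [DecidableEq V]

/-- The index `i_f(x) = 1 - χ(S_f^-(x))`, where `S_f^-(x)` is the subgraph of `G` induced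
on `{y : y adjacent to x and f(y) < f(x)}`. -/
noncomputable def fIndex (G : SimpleGraph V) (f : V → ℝ) (x : V) : ℤ :=
  letI : Fintype ↥{y | G.Adj x y ∧ f y < f x} := (Set.toFinite _).fintype
  1 - eulerChar (G.induce {y | G.Adj x y ∧ f y < f x})

open Finset
open scoped Classical

lemma numCliques_eq {W : Type} [Fintype W] [DecidableEq W] (H : SimpleGraph W) (k : ℕ) :
    numCliques H k
      = (Finset.univ.filter (fun s : Finset W => H.IsClique ↑s ∧ s.card = k)).card := by
  unfold numCliques
  refine congrArg Finset.card ?_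
  ext s
  simp [SimpleGraph.mem_cliqueFinset_iff, SimpleGraph.isNClique_iff]

lemma eulerChar_eq {W : Type} [Fintype W] [DecidableEq W] (H : SimpleGraph W) :
    eulerChar H
      = ∑ s ∈ Finset.univ.filter (fun s : Finset W => H.IsClique ↑s ∧ s.Nonempty),
          (-1 : ℤ) ^ (s.card - 1) := by
  rw [eulerChar,
    ← Finset.sum_fiberwise_of_maps_to (g := fun s : Finset W => s.card - 1)
      (fun s hs => ?_)]
  · refine Finset.sum_congr rfl fun k _ => ?_
    rw [Finset.sum_congr rfl (fun s hs => ?_), Finset.sum_const, nsmul_eq_mul, mul_comm]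
    · rw [numCliques_eq]
      congr 2
      refine congrArg Finset.card ?_
      ext s
      simp only [Finset.mem_filter, Finset.mem_univ, true_and]
      constructor
      · rintro ⟨h1, h2⟩
        exact ⟨⟨h1, Finset.card_pos.mp (by omega)⟩, by omega⟩
      · rintro ⟨⟨h1, h2⟩, h3⟩
        exact ⟨h1, by have := h2.card_pos; omega⟩
    · simp only [Finset.mem_filter] at hs
      rw [hs.2]
  · simp only [Finset.mem_filter, Finset.mem_univ, true_and] at hs
    have h1 : s.card ≤ Fintype.card W := s.card_le_univ.trans_eq (by simp)
    have h2 : 1 ≤ s.card := hs.2.card_pos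
    simp only [Finset.mem_range]
    omega

lemma fIndex_eq (G : SimpleGraph V) (f : V → ℝ) (hf : Function.Injective f) (x : V) :
    fIndex G f x
      = ∑ s ∈ Finset.univ.filter
          (fun s : Finset V => G.IsClique ↑s ∧ x ∈ s ∧ ∀ y ∈ s, f y ≤ f x),
          (-1 : ℤ) ^ (s.card - 1) := by
  set S : Set V := {y | G.Adj x y ∧ f y < f x} with hS
  letI : Fintype ↥S := (Set.toFinite _).fintype
  have key : ∑ s ∈ Finset.univ.filter
          (fun s : Finset V => G.IsClique ↑s ∧ x ∈ s ∧ ∀ y ∈ s, f y ≤ f x),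
          (-1 : ℤ) ^ (s.card - 1)
      = ∑ t ∈ Finset.univ.filter (fun t : Finset ↥S => (G.induce S).IsClique ↑t),
          (-1 : ℤ) ^ t.card := by
    have hsub : ∀ (s : Finset V), G.IsClique ↑s → x ∈ s → (∀ y ∈ s, f y ≤ f x) →
        ∀ y ∈ s.erase x, y ∈ S := by
      intro s hcl hxs hmax y hy
      rw [Finset.mem_erase] at hy
      refine ⟨hcl hxs (hy.2) (Ne.symm hy.1), lt_of_le_of_ne (hmax y hy.2) (hf.ne hy.1)⟩
    refine Finset.sum_bij' (fun s _ => (s.erase x).subtype (· ∈ S))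
      (fun t _ => insert x (t.map (Function.Embedding.subtype (· ∈ S)))) ?_ ?_ ?_ ?_ ?_
    · intro s hs
      simp only [Finset.mem_filter, Finset.mem_univ, true_and] at hs ⊢
      intro a ha b hb hab
      simp only [Finset.mem_coe, Finset.mem_subtype] at ha hb
      have : (a : V) ≠ (b : V) := fun h => hab (Subtype.ext h)
      simpa using hs.1 (Finset.mem_erase.mp ha).2 (Finset.mem_erase.mp hb).2 this
    · intro t ht
      simp only [Finset.mem_filter, Finset.mem_univ, true_and] at ht ⊢
      have hmem : ∀ y ∈ t.map (Function.Embedding.subtype (· ∈ S)), y ∈ S := by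
        intro y hy
        rw [Finset.mem_map] at hy
        obtain ⟨a, _, rfl⟩ := hy
        exact a.2
      refine ⟨?_, Finset.mem_insert_self _ _, ?_⟩
      · intro y hy z hz hyz
        simp only [Finset.coe_insert, Set.mem_insert_iff, Finset.mem_coe] at hy hz
        rcases hy with rfl | hy
        · rcases hz with rfl | hz
          · exact absurd rfl hyz
          · exact (hmem z hz).1
        · rcases hz with rfl | hz
          · exact ((hmem y hy).1).symm
          · rw [Finset.mem_map] at hy hz
            obtain ⟨a, ha, rfl⟩ := hy
            obtain ⟨b, hb, rfl⟩ := hz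
            have hab : a ≠ b := fun h => hyz (congrArg _ h)
            simpa using ht ha hb hab
      · intro y hy
        rcases Finset.mem_insert.mp hy with rfl | hy
        · exact le_rfl
        · exact (hmem y hy).2.le
    · intro s hs
      simp only [Finset.mem_filter, Finset.mem_univ, true_and] at hs
      rw [Finset.subtype_map_of_mem (hsub s hs.1 hs.2.1 hs.2.2), Finset.insert_erase hs.2.1]
    · intro t ht
      have hx : x ∉ t.map (Function.Embedding.subtype (· ∈ S)) := by
        intro hx
        rw [Finset.mem_map] at hx
        obtain ⟨a, _, ha⟩ := hx
        have : x ∈ S := ha ▸ a.2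
        exact G.irrefl this.1
      rw [Finset.erase_insert hx]
      ext a
      simp only [Finset.mem_subtype, Finset.mem_map, Function.Embedding.coe_subtype]
      constructor
      · rintro ⟨b, hb, h⟩
        rwa [Subtype.ext h] at hb
      · exact fun h => ⟨a, h, rfl⟩
    · intro s hs
      simp only [Finset.mem_filter, Finset.mem_univ, true_and] at hs
      congr 1
      rw [Finset.card_subtype, Finset.filter_true_of_mem (hsub s hs.1 hs.2.1 hs.2.2),
        Finset.card_erase_of_mem hs.2.1]
  rw [key]
  show (1 : ℤ) - eulerChar (G.induce S) = _
  rw [eulerChar_eq]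
  have hempty : (∅ : Finset ↥S) ∈ Finset.univ.filter
      (fun t : Finset ↥S => (G.induce S).IsClique ↑t) := by
    simp [SimpleGraph.isClique_empty]
  rw [← Finset.add_sum_erase _ _ hempty]
  have herase : (Finset.univ.filter (fun t : Finset ↥S => (G.induce S).IsClique ↑t)).erase ∅
      = Finset.univ.filter (fun t : Finset ↥S => (G.induce S).IsClique ↑t ∧ t.Nonempty) := by
    ext t
    simp [Finset.mem_erase, Finset.nonempty_iff_ne_empty, and_comm]
  rw [herase]
  have hterm : ∀ t ∈ Finset.univ.filter
      (fun t : Finset ↥S => (G.induce S).IsClique ↑t ∧ t.Nonempty),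
      ((-1 : ℤ) ^ t.card) = -(-1 : ℤ) ^ (t.card - 1) := by
    intro t ht
    simp only [Finset.mem_filter] at ht
    have h1 : 1 ≤ t.card := ht.2.2.card_pos
    have h2 : t.card - 1 + 1 = t.card := by omega
    conv_lhs => rw [← h2]
    rw [pow_succ]
    ring
  rw [Finset.sum_congr rfl hterm, Finset.sum_neg_distrib]
  simp [sub_eq_add_neg]
  convert rfl

/-- **Poincaré–Hopf**: for every injective `f : V → ℝ`, `Σ_{x ∈ V} i_f(x) = χ(G)`. -/
theorem poincare_hopf (G : SimpleGraph V) (f : V → ℝ) (hf : Function.Injective f) :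
    ∑ x : V, fIndex G f x = eulerChar G := by
  rw [eulerChar_eq, Finset.sum_congr rfl (fun x _ => fIndex_eq G f hf x)]
  have hsplit : ∀ x : V, Finset.univ.filter
      (fun s : Finset V => G.IsClique ↑s ∧ x ∈ s ∧ ∀ y ∈ s, f y ≤ f x)
      = (Finset.univ.filter (fun s : Finset V => G.IsClique ↑s ∧ s.Nonempty)).filter
          (fun s => x ∈ s ∧ ∀ y ∈ s, f y ≤ f x) := by
    intro x
    ext s
    simp only [Finset.mem_filter, Finset.mem_univ, true_and]
    constructor
    · rintro ⟨h1, h2, h3⟩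
      exact ⟨⟨h1, ⟨x, h2⟩⟩, h2, h3⟩
    · rintro ⟨⟨h1, _⟩, h2, h3⟩
      exact ⟨h1, h2, h3⟩
  rw [Finset.sum_congr rfl (fun x _ => by rw [hsplit x, Finset.sum_filter])]
  rw [Finset.sum_comm]
  refine Finset.sum_congr rfl fun s hs => ?_
  simp only [Finset.mem_filter, Finset.mem_univ, true_and] at hs
  obtain ⟨x0, hx0, hmax⟩ := Finset.exists_max_image s f hs.2
  rw [Finset.sum_eq_single_of_mem x0 (Finset.mem_univ x0)]
  · rw [if_pos ⟨hx0, hmax⟩]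
  · intro b _ hb
    rw [if_neg]
    rintro ⟨hbs, hbmax⟩
    exact hb (hf (le_antisymm (hmax b hbs) (hbmax x0 hx0)))
end
end

section
/- Every automorphism T of a finite tree G (a connected acyclic finite simple graph) has a fixed vertex or a fixed edge: there exists a vertex v with T(v) = v, or an edge {a,b} of G with {T(a),T(b)} = {a,b}. -/
/-!
Every automorphism of a finite tree has a fixed vertex or a fixed edge.
-/

set_option linter.unusedSectionVars false

open SimpleGraph Walk

variable {V : Type} [DecidableEq V]

/-- In a tree, every path has length equal to the distance between its endpoints. -/
lemma tree_path_length {G : SimpleGraph V} (hG : G.IsTree) {u v : V} (p : G.Walk u v)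
    (hp : p.IsPath) : p.length = G.dist u v := by
  obtain ⟨q, hq⟩ := (hG.isConnected u v).exists_walk_length_eq_dist
  have huniq := hG.existsUnique_path u v
  have h1 : p = q.bypass := (huniq.unique hp q.bypass_isPath)
  have : p.length ≤ G.dist u v := by
    rw [h1, ← hq]; exact q.length_bypass_le
  exact le_antisymm this (SimpleGraph.dist_le p)

/-- Additivity of distance along a path in a tree. -/
lemma tree_support_dist {G : SimpleGraph V} (hG : G.IsTree) {u v x : V} (p : G.Walk u v)
    (hp : p.IsPath) (hx : x ∈ p.support) :
    G.dist u v = G.dist u x + G.dist x v := by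
  have hspec := p.take_spec hx
  have h1 : (p.takeUntil x hx).length = G.dist u x :=
    tree_path_length hG _ (hp.takeUntil hx)
  have h2 : (p.dropUntil x hx).length = G.dist x v :=
    tree_path_length hG _ (hp.dropUntil hx)
  have := tree_path_length hG p hp
  rw [← this, ← hspec, length_append, h1, h2]

/-- First vertex of a walk lying in a set `S` (which contains the endpoint):
decomposition of the walk. -/
lemma exists_first_decomp {G : SimpleGraph V} {u v : V} (q : G.Walk u v) (S : Set V)
    (hv : v ∈ S) :
    ∃ (p : V) (q1 : G.Walk u p) (q2 : G.Walk p v),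
      q = q1.append q2 ∧ p ∈ S ∧ ∀ x ∈ q1.support, x ∈ S → x = p := by
  induction q with
  | nil => exact ⟨_, Walk.nil, Walk.nil, rfl, hv, by simp⟩
  | cons h q ih =>
    rename_i a b c
    by_cases ha : a ∈ S
    · exact ⟨a, Walk.nil, Walk.cons h q, rfl, ha, by simp⟩
    · obtain ⟨p, q1, q2, heq, hpS, hfirst⟩ := ih hv
      refine ⟨p, Walk.cons h q1, q2, by rw [heq, Walk.cons_append], hpS, ?_⟩
      intro x hx hxS
      rw [Walk.support_cons] at hx
      rcases List.mem_cons.mp hx with hx | hx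
      · exact absurd (hx ▸ hxS) ha
      · exact hfirst x hx hxS

/-- Median lemma: given a path `r` from `c1` to `c2` in a tree and any vertex `w`,
there is a vertex `p` on `r` through which the geodesics from `w` to `c1` and `c2` pass. -/
lemma tree_median {G : SimpleGraph V} (hG : G.IsTree) {c1 c2 : V} (r : G.Walk c1 c2)
    (hr : r.IsPath) (w : V) :
    ∃ p ∈ r.support, G.dist w c1 = G.dist w p + G.dist p c1 ∧
      G.dist w c2 = G.dist w p + G.dist p c2 := by
  classical
  obtain ⟨q0⟩ := hG.isConnected w c1
  set q := q0.bypass with hqdef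
  have hq : q.IsPath := q0.bypass_isPath
  obtain ⟨p, q1, q2, heq, hpS, hfirst⟩ :=
    exists_first_decomp q {x | x ∈ r.support} (r.start_mem_support)
  have hq1 : q1.IsPath := by
    have := heq ▸ hq; exact this.of_append_left
  have hq2 : q2.IsPath := by
    have := heq ▸ hq; exact this.of_append_right
  refine ⟨p, hpS, ?_, ?_⟩
  · -- dist w c1 additivity
    have h1 : q1.length = G.dist w p := tree_path_length hG q1 hq1
    have h2 : q2.length = G.dist p c1 := tree_path_length hG q2 hq2
    have h3 : q.length = G.dist w c1 := tree_path_length hG q hq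
    rw [← h1, ← h2, ← h3, heq, length_append]
  · -- dist w c2 additivity via concatenated path
    set d := r.dropUntil p hpS with hd
    have hdpath : d.IsPath := hr.dropUntil hpS
    have hm : (q1.append d).IsPath := by
      rw [Walk.isPath_def, Walk.support_append]
      refine List.Nodup.append (hq1.support_nodup) ?_ ?_
      · exact ((Walk.isPath_def d).mp hdpath).tail
      · intro x hx1 hx2
        have hxr : x ∈ r.support := r.support_dropUntil_subset hpS (List.mem_of_mem_tail hx2)
        have : x = p := hfirst x hx1 hxr
        subst this
        have : x ∉ d.support.tail := by
          have hnodup := (Walk.isPath_def d).mp hdpath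
          rw [d.support_eq_cons] at hnodup
          exact (List.nodup_cons.mp hnodup).1
        exact this hx2
    have h1 : q1.length = G.dist w p := tree_path_length hG q1 hq1
    have h2 : d.length = G.dist p c2 := tree_path_length hG d hdpath
    have h3 : (q1.append d).length = G.dist w c2 := tree_path_length hG _ hm
    rw [← h1, ← h2, ← h3, length_append]

/-- Graph isomorphisms preserve distance. -/
lemma iso_dist {G : SimpleGraph V} (hG : G.Connected) (T : G ≃g G) (a b : V) :
    G.dist (T a) (T b) = G.dist a b := by
  have key : ∀ (S : G ≃g G) (x y : V), G.dist (S x) (S y) ≤ G.dist x y := by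
    intro S x y
    obtain ⟨q, hq⟩ := (hG x y).exists_walk_length_eq_dist
    calc G.dist (S x) (S y) ≤ (q.map S.toHom).length := SimpleGraph.dist_le _
      _ = q.length := q.length_map _
      _ = G.dist x y := hq
  refine le_antisymm (key T a b) ?_
  have := key T.symm (T a) (T b)
  simpa using this

/-- Trees have no triangles. -/
lemma tree_no_triangle {G : SimpleGraph V} (hG : G.IsTree) {a b c : V}
    (hab : G.Adj a b) (hbc : G.Adj b c) (hac : G.Adj a c) : False := by
  have hbne : b ≠ c := hbc.ne
  have habne : a ≠ b := hab.ne
  have hacne : a ≠ c := hac.ne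
  have p1 : G.Walk a c := Walk.cons hac Walk.nil
  have h1 : (Walk.cons hac Walk.nil : G.Walk a c).IsPath := by
    simp [Walk.isPath_def, hacne]
  have h2 : (Walk.cons hab (Walk.cons hbc Walk.nil) : G.Walk a c).IsPath := by
    simp [Walk.isPath_def, habne, hbne, hacne]
  have e1 := tree_path_length hG _ h1
  have e2 := tree_path_length hG _ h2
  simp only [Walk.length_cons, Walk.length_nil] at e1 e2
  omega

/-- Two distinct vertices of minimal eccentricity in a tree are adjacent. -/
lemma center_adj [Fintype V] {G : SimpleGraph V} (hG : G.IsTree) (c1 c2 : V)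
    (hmin : ∀ v : V, Finset.univ.sup (G.dist c1) ≤ Finset.univ.sup (G.dist v))
    (heq : Finset.univ.sup (G.dist c2) = Finset.univ.sup (G.dist c1))
    (hne : c1 ≠ c2) : G.Adj c1 c2 := by
  classical
  by_contra hadj
  have hconn := hG.isConnected
  have hD1 : G.dist c1 c2 ≠ 1 := fun h => hadj (SimpleGraph.dist_eq_one_iff_adj.mp h)
  have hD : 2 ≤ G.dist c1 c2 := by
    have := hconn.pos_dist_of_ne hne; omega
  obtain ⟨r0⟩ := hconn c1 c2
  set r := r0.bypass with hrdef
  have hr : r.IsPath := r0.bypass_isPath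
  have hrlen : r.length = G.dist c1 c2 := tree_path_length hG r hr
  cases hrc : r with
  | nil => exact hne rfl
  | cons h r' =>
    rename_i m
    have hr' : r'.IsPath := by rw [hrc] at hr; exact hr.of_cons
    have hdm : G.dist m c2 = r'.length := (tree_path_length hG r' hr').symm
    have hmc2 : G.dist m c2 + 1 = G.dist c1 c2 := by
      rw [hdm, ← hrlen, hrc, Walk.length_cons]
    have key : ∀ w : V, G.dist m w + 1 ≤ Finset.univ.sup (G.dist c1) := by
      intro w
      obtain ⟨p, hp, eq1, eq2⟩ := tree_median hG r hr w
      rw [hrc, Walk.support_cons, List.mem_cons] at hp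
      have tri : G.dist m w ≤ G.dist m p + G.dist p w := hconn.dist_triangle
      have comm1 : G.dist p w = G.dist w p := SimpleGraph.dist_comm
      rcases hp with hp | hp
      · -- p = c1
        subst hp
        have hmp : G.dist m p = 1 := by
          rw [SimpleGraph.dist_comm]; exact SimpleGraph.dist_eq_one_iff_adj.mpr h
        have hle : G.dist c2 w ≤ Finset.univ.sup (G.dist c2) :=
          Finset.le_sup (Finset.mem_univ w)
        rw [heq] at hle
        have comm2 : G.dist w c2 = G.dist c2 w := SimpleGraph.dist_comm
        have hpp : G.dist p p = 0 := by
          simp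
        omega
      · -- p on r'
        have eqA : G.dist c1 c2 = G.dist c1 p + G.dist p c2 := by
          apply tree_support_dist hG r hr
          rw [hrc, Walk.support_cons]; exact List.mem_cons_of_mem _ hp
        have eqB : G.dist m c2 = G.dist m p + G.dist p c2 :=
          tree_support_dist hG r' hr' hp
        have hle : G.dist c1 w ≤ Finset.univ.sup (G.dist c1) :=
          Finset.le_sup (Finset.mem_univ w)
        have comm3 : G.dist c1 w = G.dist w c1 := SimpleGraph.dist_comm
        have comm4 : G.dist p c1 = G.dist c1 p := SimpleGraph.dist_comm
        omega
    have hpos : 0 < Finset.univ.sup (G.dist c1) := by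
      have : G.dist c1 c2 ≤ Finset.univ.sup (G.dist c1) := Finset.le_sup (Finset.mem_univ c2)
      omega
    have hlt : Finset.univ.sup (G.dist m) < Finset.univ.sup (G.dist c1) := by
      rw [Finset.sup_lt_iff hpos]
      intro w _
      have := key w; omega
    exact absurd (hmin m) (not_le.mpr hlt)

lemma iso_ecc [Fintype V] {G : SimpleGraph V} (hG : G.Connected) (T : G ≃g G) (v : V) :
    Finset.univ.sup (G.dist (T v)) = Finset.univ.sup (G.dist v) := by
  apply le_antisymm
  · apply Finset.sup_le
    intro u _
    have : G.dist (T v) u = G.dist v (T.symm u) := by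
      conv_lhs => rw [show u = T (T.symm u) by simp]
      exact iso_dist hG T v (T.symm u)
    rw [this]
    exact Finset.le_sup (Finset.mem_univ _)
  · apply Finset.sup_le
    intro u _
    have : G.dist v u = G.dist (T v) (T u) := (iso_dist hG T v u).symm
    rw [this]
    exact Finset.le_sup (Finset.mem_univ _)

/-- **Fixed vertex or fixed edge for trees**: every automorphism `T` of a finite tree `G`
(a connected acyclic finite simple graph) has a fixed vertex `v`, or a fixed edge `{a,b}`
with `{T a, T b} = {a, b}`. -/
theorem tree_automorphism_fixed_vertex_or_edge (V : Type) [Fintype V] [DecidableEq V]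
    (G : SimpleGraph V) (hG : G.IsTree) (T : G ≃g G) :
    (∃ v : V, T v = v) ∨
      (∃ a b : V, G.Adj a b ∧ ({T a, T b} : Finset V) = {a, b}) := by
  classical
  have hconn := hG.isConnected
  obtain ⟨c, -, hmin⟩ := Finset.exists_min_image Finset.univ
    (fun v => Finset.univ.sup (G.dist v)) ⟨hconn.nonempty.some, Finset.mem_univ _⟩
  simp only [Finset.mem_univ, forall_const, true_implies] at hmin
  have hecc : ∀ v : V, Finset.univ.sup (G.dist (T v)) = Finset.univ.sup (G.dist v) :=
    iso_ecc hconn T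
  by_cases h1 : T c = c
  · exact Or.inl ⟨c, h1⟩
  by_cases h2 : T (T c) = T c
  · exact Or.inl ⟨T c, h2⟩
  have hadj1 : G.Adj c (T c) :=
    center_adj hG c (T c) hmin (hecc c) (fun h => h1 h.symm)
  by_cases h3 : T (T c) = c
  · refine Or.inr ⟨c, T c, hadj1, ?_⟩
    rw [h3, Finset.pair_comm]
  · exfalso
    have heccb : Finset.univ.sup (G.dist (T c)) = Finset.univ.sup (G.dist c) := hecc c
    have hminb : ∀ v : V, Finset.univ.sup (G.dist (T c)) ≤ Finset.univ.sup (G.dist v) := by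
      intro v; rw [heccb]; exact hmin v
    have hadj2 : G.Adj (T c) (T (T c)) :=
      center_adj hG (T c) (T (T c)) hminb
        (by rw [hecc (T c)]) (fun h => h2 h.symm)
    have hadj3 : G.Adj c (T (T c)) :=
      center_adj hG c (T (T c)) hmin
        (by rw [hecc (T c), heccb]) (fun h => h3 h.symm)
    exact tree_no_triangle hG hadj1 hadj2 hadj3
end

section
/- For any two real n×m matrices F and G and any real number x, det(I_m + x FᵀG) = Σ_{(A,B)} x^{|A|} det(F[A,B]) det(G[A,B]), where the sum ranges over all pairs of subsets A ⊆ {1,…,n}, B ⊆ {1,…,m} with |A| = |B|, F[A,B] denotes the submatrix of F with rows indexed by A and columns indexed by B, and the determinant of the empty 0×0 matrix is 1. -/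
/-!
Generalized Cauchy–Binet: for real `n × m` matrices `F, G` and `x : ℝ`,
`det(I_m + x FᵀG) = Σ_{(A,B), |A|=|B|} x^{|A|} det(F[A,B]) det(G[A,B])`.
-/

noncomputable section

open Matrix Finset Equiv

noncomputable section

/-- The bijection sending `(A, g)` to the injective function `orderEmbOfFin A ∘ g`. -/
def pairToInj (n k : ℕ) (z : Σ _A : {A : Finset (Fin n) // A.card = k}, Equiv.Perm (Fin k)) :
    {p : Fin k → Fin n // Function.Injective p} :=
  ⟨(z.1.1.orderEmbOfFin z.1.2) ∘ z.2, (z.1.1.orderEmbOfFin z.1.2).injective.comp z.2.injective⟩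

lemma image_orderEmbOfFin_comp {n k : ℕ} (A : Finset (Fin n)) (hA : A.card = k)
    (g : Equiv.Perm (Fin k)) : Finset.image ((A.orderEmbOfFin hA) ∘ g) Finset.univ = A := by
  ext y
  simp only [Finset.mem_image, Function.comp_apply, Finset.mem_univ, true_and]
  constructor
  · rintro ⟨i, rfl⟩; exact A.orderEmbOfFin_mem hA _
  · intro hy
    refine ⟨g.symm ((A.orderIsoOfFin hA).symm ⟨y, hy⟩), ?_⟩
    rw [Equiv.apply_symm_apply, ← Finset.coe_orderIsoOfFin_apply, OrderIso.apply_symm_apply]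

lemma pairToInj_bijective (n k : ℕ) : Function.Bijective (pairToInj n k) := by
  constructor
  · rintro ⟨⟨A, hA⟩, g⟩ ⟨⟨B, hB⟩, g'⟩ h
    have h' : (A.orderEmbOfFin hA) ∘ g = (B.orderEmbOfFin hB) ∘ g' := congrArg Subtype.val h
    have hAB : A = B := by
      rw [← image_orderEmbOfFin_comp A hA g, ← image_orderEmbOfFin_comp B hB g', h']
    subst hAB
    have hg : g = g' := by
      refine Equiv.ext fun i => (A.orderEmbOfFin hA).injective ?_
      simpa using congrFun h' i
    subst hg
    rfl
  · rintro ⟨p, hp⟩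
    have hcard : (Finset.image p Finset.univ).card = k := by
      rw [Finset.card_image_of_injective _ hp, Finset.card_univ, Fintype.card_fin]
    set A := Finset.image p Finset.univ with hAdef
    have hmem : ∀ i, p i ∈ A := fun i => Finset.mem_image_of_mem _ (Finset.mem_univ i)
    have hinj : Function.Injective (fun i => (A.orderIsoOfFin hcard).symm ⟨p i, hmem i⟩) := by
      intro i j hij
      apply hp
      have := congrArg (A.orderIsoOfFin hcard) hij
      simp only [OrderIso.apply_symm_apply] at this
      exact congrArg Subtype.val this
    refine ⟨⟨⟨A, hcard⟩, Equiv.ofBijective _ (Finite.injective_iff_bijective.mp hinj)⟩, ?_⟩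
    apply Subtype.ext
    funext i
    show A.orderEmbOfFin hcard ((A.orderIsoOfFin hcard).symm ⟨p i, hmem i⟩) = p i
    rw [← Finset.coe_orderIsoOfFin_apply, OrderIso.apply_symm_apply]

set_option maxHeartbeats 1000000 in
/-- Cauchy–Binet. -/
lemma cauchy_binet (k n : ℕ) (P : Matrix (Fin k) (Fin n) ℝ) (Q : Matrix (Fin n) (Fin k) ℝ) :
    (P * Q).det = ∑ A : Finset (Fin n), if h : A.card = k then
        (P.submatrix id (A.orderEmbOfFin h)).det * (Q.submatrix (A.orderEmbOfFin h) id).det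
      else 0 := by
  classical
  have h1 : (P * Q).det = ∑ p : Fin k → Fin n,
      (∏ i, Q (p i) i) * (P.submatrix id p).det := by
    simp only [det_apply', mul_apply, Finset.prod_univ_sum, Finset.mul_sum,
      Fintype.piFinset_univ]
    rw [Finset.sum_comm]
    refine Finset.sum_congr rfl fun p _ => ?_
    refine Finset.sum_congr rfl fun σ _ => ?_
    rw [Finset.prod_mul_distrib]
    simp only [submatrix_apply, id_eq]
    ring
  rw [h1]
  have h2 : ∀ p : Fin k → Fin n, ¬ Function.Injective p →
      (∏ i, Q (p i) i) * (P.submatrix id p).det = 0 := by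
    intro p hp
    rw [Function.not_injective_iff] at hp
    obtain ⟨i, j, hij, hne⟩ := hp
    rw [Matrix.det_zero_of_column_eq hne (by simp [hij]), mul_zero]
  rw [← Finset.sum_filter_add_sum_filter_not Finset.univ (fun p => Function.Injective p)]
  rw [Finset.sum_eq_zero (fun p hp => h2 p (Finset.mem_filter.mp hp).2), add_zero]
  rw [Finset.sum_subtype (p := fun p => Function.Injective p) _ (by simp)]
  have hbij := Fintype.sum_bijective (pairToInj n k) (pairToInj_bijective n k)
    (fun z => (∏ i, Q ((pairToInj n k z).1 i) i) * (P.submatrix id ((pairToInj n k z).1)).det)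
    (fun p => (∏ i, Q (p.1 i) i) * (P.submatrix id p.1).det) (fun z => rfl)
  rw [← hbij, ← Finset.univ_sigma_univ, Finset.sum_sigma]
  have h3 : (∑ A : Finset (Fin n), if h : A.card = k then
        (P.submatrix id (A.orderEmbOfFin h)).det * (Q.submatrix (A.orderEmbOfFin h) id).det
      else 0)
      = ∑ A : {A : Finset (Fin n) // A.card = k},
        (P.submatrix id (A.1.orderEmbOfFin A.2)).det * (Q.submatrix (A.1.orderEmbOfFin A.2) id).det := by
    rw [← Finset.sum_filter_add_sum_filter_not Finset.univ (fun A : Finset (Fin n) => A.card = k)]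
    rw [Finset.sum_eq_zero (fun A hA => dif_neg (Finset.mem_filter.mp hA).2), add_zero]
    rw [Finset.sum_subtype (p := fun A : Finset (Fin n) => A.card = k) _ (by simp)]
    exact Fintype.sum_congr _ _ fun A => dif_pos A.2
  rw [h3]
  refine Finset.sum_congr rfl fun A _ => ?_
  show (∑ g : Equiv.Perm (Fin k),
      (∏ i, Q (((A.1.orderEmbOfFin A.2) ∘ g) i) i)
        * (P.submatrix id ((A.1.orderEmbOfFin A.2) ∘ g)).det) = _
  have h4 : ∀ g : Equiv.Perm (Fin k),
      (∏ i, Q (((A.1.orderEmbOfFin A.2) ∘ g) i) i)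
        * (P.submatrix id ((A.1.orderEmbOfFin A.2) ∘ g)).det
      = ((Equiv.Perm.sign g : ℝ) * ∏ i, (Q.submatrix (A.1.orderEmbOfFin A.2) id) (g i) i)
          * (P.submatrix id (A.1.orderEmbOfFin A.2)).det := by
    intro g
    have hsub : P.submatrix id ((A.1.orderEmbOfFin A.2) ∘ g)
        = (P.submatrix id (A.1.orderEmbOfFin A.2)).submatrix id g := by
      ext i j; simp
    rw [hsub, Matrix.det_permute']
    simp only [submatrix_apply, id_eq, Function.comp_apply]
    ring
  rw [Finset.sum_congr rfl fun g _ => h4 g]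
  rw [← Finset.sum_mul]
  rw [mul_comm]
  congr 1
  rw [Matrix.det_apply']


lemma det_piecewise_block {m : ℕ} (N : Matrix (Fin m) (Fin m) ℝ) (S : Finset (Fin m))
    (M : Matrix (Fin m) (Fin m) ℝ)
    (hMem : ∀ i j, i ∈ S → M i j = (1 : Matrix (Fin m) (Fin m) ℝ) i j)
    (hMnot : ∀ i j, i ∉ S → M i j = N i j) :
    M.det = (N.submatrix ((Sᶜ).orderEmbOfFin rfl) ((Sᶜ).orderEmbOfFin rfl)).det := by
  classical
  have htri : ∀ i, ¬ (i ∉ S) → ∀ j, (j ∉ S) → M i j = 0 := by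
    intro i hi j hj
    rw [not_not] at hi
    rw [hMem i j hi, Matrix.one_apply_ne (fun h => hj (by rw [← h]; exact hi))]
  rw [Matrix.twoBlockTriangular_det M (fun i => i ∉ S) htri]
  have hblock2 : (Matrix.toSquareBlockProp M fun i => ¬ (i ∉ S)) = 1 := by
    ext i j
    have hi : (i : Fin m) ∈ S := not_not.mp i.2
    show M (i : Fin m) (j : Fin m) = _
    rw [hMem _ _ hi, Matrix.one_apply, Matrix.one_apply]
    simp [Subtype.ext_iff]
  rw [hblock2, Matrix.det_one, mul_one]
  let e : Fin ((Sᶜ).card) ≃ {i : Fin m // i ∉ S} :=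
    ((Sᶜ).orderIsoOfFin rfl).toEquiv.trans
      (Equiv.subtypeEquivRight (fun x => by simp))
  rw [← Matrix.det_submatrix_equiv_self e (Matrix.toSquareBlockProp M fun i => i ∉ S)]
  congr 1
  ext i j
  have hcoe : ∀ i : Fin ((Sᶜ).card), ((e i : {i : Fin m // i ∉ S}) : Fin m)
      = (Sᶜ).orderEmbOfFin rfl i := fun i => Finset.coe_orderIsoOfFin_apply (Sᶜ) rfl i
  have hnot : ((Sᶜ).orderEmbOfFin rfl i : Fin m) ∉ S :=
    Finset.mem_compl.mp ((Sᶜ).orderEmbOfFin_mem rfl i)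
  show M ((e i : {i : Fin m // i ∉ S}) : Fin m) ((e j : {i : Fin m // i ∉ S}) : Fin m) = _
  rw [hcoe, hcoe, hMnot _ _ hnot]
  rfl

lemma det_one_add_expand (m : ℕ) (N : Matrix (Fin m) (Fin m) ℝ) :
    (1 + N).det = ∑ B : Finset (Fin m),
      (N.submatrix (B.orderEmbOfFin rfl) (B.orderEmbOfFin rfl)).det := by
  classical
  have key : ∀ S : Finset (Fin m),
      Matrix.detRowAlternating
        (S.piecewise (fun i => (1 : Matrix (Fin m) (Fin m) ℝ) i) (fun i => N i))
      = (N.submatrix ((Sᶜ).orderEmbOfFin rfl) ((Sᶜ).orderEmbOfFin rfl)).det := by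
    intro S
    have h1 : Matrix.detRowAlternating
        (S.piecewise (fun i => (1 : Matrix (Fin m) (Fin m) ℝ) i) (fun i => N i))
      = (Matrix.of (S.piecewise (fun i => (1 : Matrix (Fin m) (Fin m) ℝ) i)
          (fun i => N i))).det := rfl
    rw [h1]
    refine det_piecewise_block N S _ (fun i j hi => ?_) (fun i j hi => ?_)
    · exact congrFun (S.piecewise_eq_of_mem
        (fun i => (1 : Matrix (Fin m) (Fin m) ℝ) i) (fun i => N i) hi) j
    · exact congrFun (S.piecewise_eq_of_notMem
        (fun i => (1 : Matrix (Fin m) (Fin m) ℝ) i) (fun i => N i) hi) j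
  have hmap := (Matrix.detRowAlternating (n := Fin m) (R := ℝ)).toMultilinearMap.map_add_univ
      (fun i => (1 : Matrix (Fin m) (Fin m) ℝ) i) (fun i => N i)
  simp only [AlternatingMap.coe_multilinearMap] at hmap
  have h0 : (1 + N).det = ∑ S : Finset (Fin m),
      Matrix.detRowAlternating
        (S.piecewise (fun i => (1 : Matrix (Fin m) (Fin m) ℝ) i) (fun i => N i)) := hmap
  rw [h0, Finset.sum_congr rfl fun S _ => key S]
  exact Fintype.sum_bijective (fun S : Finset (Fin m) => Sᶜ)
    (Function.Involutive.bijective (fun S : Finset (Fin m) => compl_compl S)) _ _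
    (fun S => rfl)


/-- The determinant of the square submatrix of `M` with rows indexed by `A` and columns
indexed by `B` (rows and columns taken in increasing order); it is `0` (junk) when
`|A| ≠ |B|`, and the determinant of the empty `0 × 0` matrix is `1`. -/
noncomputable def minorDet {n m : ℕ} (M : Matrix (Fin n) (Fin m) ℝ)
    (A : Finset (Fin n)) (B : Finset (Fin m)) : ℝ :=
  if h : B.card = A.card then
    (M.submatrix (⇑(A.orderEmbOfFin rfl)) (⇑(B.orderEmbOfFin h))).det
  else 0

lemma orderEmb_det_irrel {n m : ℕ} (M : Matrix (Fin n) (Fin m) ℝ)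
    (A : Finset (Fin n)) (B : Finset (Fin m)) {k l : ℕ} (hkl : k = l)
    (hA : A.card = k) (hB : B.card = k) (hA' : A.card = l) (hB' : B.card = l) :
    (M.submatrix (A.orderEmbOfFin hA) (B.orderEmbOfFin hB)).det
      = (M.submatrix (A.orderEmbOfFin hA') (B.orderEmbOfFin hB')).det := by
  subst hkl; rfl

lemma minorDet_eq {n m : ℕ} (M : Matrix (Fin n) (Fin m) ℝ)
    (A : Finset (Fin n)) (B : Finset (Fin m)) (h : A.card = B.card) :
    minorDet M A B = (M.submatrix (A.orderEmbOfFin h) (B.orderEmbOfFin rfl)).det := by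
  rw [minorDet, dif_pos h.symm]
  exact orderEmb_det_irrel M A B h rfl h.symm h rfl

/-- **Generalized Cauchy–Binet**: for any real `n × m` matrices `F` and `G` and any `x : ℝ`,
`det(I_m + x FᵀG) = Σ_{(A,B)} x^{|A|} det(F[A,B]) det(G[A,B])`, the sum ranging over all pairs
of subsets `A ⊆ {1,…,n}`, `B ⊆ {1,…,m}` with `|A| = |B|`. -/
theorem cauchy_binet_generalized {n m : ℕ} (F G : Matrix (Fin n) (Fin m) ℝ) (x : ℝ) :
    ((1 : Matrix (Fin m) (Fin m) ℝ) + x • (F.transpose * G)).det =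
      ∑ A ∈ (Finset.univ : Finset (Fin n)).powerset,
        ∑ B ∈ (Finset.univ : Finset (Fin m)).powerset.filter (fun B => B.card = A.card),
          x ^ A.card * minorDet F A B * minorDet G A B := by
  classical
  have hL : ((1 : Matrix (Fin m) (Fin m) ℝ) + x • (F.transpose * G)).det
      = ∑ B : Finset (Fin m), ∑ A : Finset (Fin n),
          if h : A.card = B.card then
            x ^ B.card * (F.submatrix (A.orderEmbOfFin h) (B.orderEmbOfFin rfl)).det
              * (G.submatrix (A.orderEmbOfFin h) (B.orderEmbOfFin rfl)).det
          else 0 := by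
    rw [det_one_add_expand m (x • (F.transpose * G))]
    refine Finset.sum_congr rfl fun B _ => ?_
    have h1 : (x • (F.transpose * G)).submatrix (B.orderEmbOfFin rfl) (B.orderEmbOfFin rfl)
        = x • ((F.transpose.submatrix (B.orderEmbOfFin rfl) id)
            * (G.submatrix id (B.orderEmbOfFin rfl))) := by
      ext i j
      simp [Matrix.mul_apply]
    rw [h1, Matrix.det_smul, Fintype.card_fin, cauchy_binet, Finset.mul_sum]
    refine Finset.sum_congr rfl fun A _ => ?_
    by_cases h : A.card = B.card
    · rw [dif_pos h, dif_pos h]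
      have e1 : (F.transpose.submatrix (B.orderEmbOfFin rfl) id).submatrix id (A.orderEmbOfFin h)
          = (F.submatrix (A.orderEmbOfFin h) (B.orderEmbOfFin rfl)).transpose := by
        ext i j; simp
      have e2 : (G.submatrix id (B.orderEmbOfFin rfl)).submatrix (A.orderEmbOfFin h) id
          = G.submatrix (A.orderEmbOfFin h) (B.orderEmbOfFin rfl) := by
        ext i j; simp
      rw [e1, e2, Matrix.det_transpose]
      ring
    · rw [dif_neg h, dif_neg h, mul_zero]
  have hR : (∑ A ∈ (Finset.univ : Finset (Fin n)).powerset,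
        ∑ B ∈ (Finset.univ : Finset (Fin m)).powerset.filter (fun B => B.card = A.card),
          x ^ A.card * minorDet F A B * minorDet G A B)
      = ∑ B : Finset (Fin m), ∑ A : Finset (Fin n),
          if h : A.card = B.card then
            x ^ B.card * (F.submatrix (A.orderEmbOfFin h) (B.orderEmbOfFin rfl)).det
              * (G.submatrix (A.orderEmbOfFin h) (B.orderEmbOfFin rfl)).det
          else 0 := by
    simp only [Finset.powerset_univ, Finset.sum_filter]
    rw [Finset.sum_comm]
    refine Finset.sum_congr rfl fun B _ => Finset.sum_congr rfl fun A _ => ?_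
    by_cases h : A.card = B.card
    · rw [if_pos h.symm, dif_pos h, minorDet_eq F A B h, minorDet_eq G A B h, h]
    · rw [if_neg (fun hh => h hh.symm), dif_neg h]
  rw [hL, ← hR]

end
end
end

section
/- Let G be a connected finite simple graph with n vertices and m edges. For every divisor D on G, r(D) − r(K − D) = deg(D) + n − m, where K is the canonical divisor K(v) = deg(v) − 2. -/
/-!
Baker–Norine Riemann–Roch for graphs: for a connected finite simple graph on `n` vertices
with `m` edges and every divisor `D`, `r(D) - r(K - D) = deg(D) + n - m`, where
`K(v) = deg(v) - 2` is the canonical divisor.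
-/

noncomputable section

variable {V : Type} [Fintype V] [DecidableEq V]

/-- The degree of a divisor `D : V → ℤ`, `deg(D) = Σ_v D(v)`. -/
def degDiv (D : V → ℤ) : ℤ := ∑ v : V, D v

/-- The Laplacian acting on integer valued functions:
`(Lf)(v) = deg(v) f(v) − Σ_{w ∼ v} f(w)`. -/
def lapDiv (G : SimpleGraph V) [DecidableRel G.Adj] (f : V → ℤ) : V → ℤ :=
  fun v => (G.degree v : ℤ) * f v - ∑ w ∈ G.neighborFinset v, f w

/-- Two divisors are linearly equivalent if they differ by `Lf` for some `f : V → ℤ`. -/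
def LinEquiv (G : SimpleGraph V) [DecidableRel G.Adj] (D D' : V → ℤ) : Prop :=
  ∃ f : V → ℤ, D - D' = lapDiv G f

/-- A divisor is effective if `D(v) ≥ 0` for all `v`. -/
def Effective (D : V → ℤ) : Prop := ∀ v, 0 ≤ D v

/-- The linear system `|D|` is nonempty: there is an effective divisor linearly
equivalent to `D`. -/
def LinSysNonempty (G : SimpleGraph V) [DecidableRel G.Adj] (D : V → ℤ) : Prop :=
  ∃ E : V → ℤ, Effective E ∧ LinEquiv G D E

/-- The rank `r(D)`: it is `-1` if `|D| = ∅`, and otherwise the largest integer `k ≥ 0` such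
that for every effective divisor `F` with `deg(F) = k` the linear system `|D - F|` is
nonempty.  (The set below contains `-1`, and contains an integer `k ≥ 0` iff `|D - F| ≠ ∅`
for every effective `F` of degree `k`; this condition is monotone downwards, so the
supremum is exactly the rank.) -/
noncomputable def divRank (G : SimpleGraph V) [DecidableRel G.Adj] (D : V → ℤ) : ℤ :=
  sSup ({-1} ∪ {k : ℤ | 0 ≤ k ∧ ∀ F : V → ℤ, Effective F → degDiv F = k →
    LinSysNonempty G (D - F)})

/-- The canonical divisor `K(v) = deg(v) - 2`. -/
def canonicalDiv (G : SimpleGraph V) [DecidableRel G.Adj] : V → ℤ :=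
  fun v => (G.degree v : ℤ) - 2

section Basics
set_option linter.unusedSectionVars false

variable (G : SimpleGraph V) [DecidableRel G.Adj]

lemma lap_apply (f : V → ℤ) (v : V) :
    lapDiv G f v = ∑ w ∈ G.neighborFinset v, (f v - f w) := by
  simp only [lapDiv, Finset.sum_sub_distrib, Finset.sum_const,
    SimpleGraph.card_neighborFinset_eq_degree, nsmul_eq_mul]

lemma lap_add (f g : V → ℤ) : lapDiv G (f + g) = lapDiv G f + lapDiv G g := by
  funext v
  simp only [lapDiv, Pi.add_apply, Finset.sum_add_distrib]
  ring

lemma lap_zero : lapDiv G (0 : V → ℤ) = 0 := by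
  funext v; simp [lapDiv]

lemma lap_neg (f : V → ℤ) : lapDiv G (-f) = - lapDiv G f := by
  funext v
  simp only [lapDiv, Pi.neg_apply, Finset.sum_neg_distrib]
  ring

lemma sum_nbr_sum (f : V → ℤ) :
    ∑ v : V, ∑ w ∈ G.neighborFinset v, f w = ∑ v : V, (G.degree v : ℤ) * f v := by
  have h : ∀ v : V, ∑ w ∈ G.neighborFinset v, f w
      = ∑ w : V, if G.Adj v w then f w else 0 := by
    intro v
    rw [SimpleGraph.neighborFinset_eq_filter, Finset.sum_filter]
  simp_rw [h]
  rw [Finset.sum_comm]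
  refine Finset.sum_congr rfl fun w _ => ?_
  rw [← Finset.sum_filter]
  have hw : Finset.univ.filter (fun v => G.Adj v w) = G.neighborFinset w := by
    ext v; simp [SimpleGraph.adj_comm]
  rw [hw, Finset.sum_const, SimpleGraph.card_neighborFinset_eq_degree, nsmul_eq_mul]

lemma degDiv_lap (f : V → ℤ) : degDiv (lapDiv G f) = 0 := by
  simp only [degDiv, lapDiv, Finset.sum_sub_distrib, sum_nbr_sum, sub_self]

lemma degDiv_sub (D E : V → ℤ) : degDiv (D - E) = degDiv D - degDiv E := by
  simp [degDiv, Finset.sum_sub_distrib]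

lemma degDiv_add (D E : V → ℤ) : degDiv (D + E) = degDiv D + degDiv E := by
  simp [degDiv, Finset.sum_add_distrib]

lemma linEquiv_refl (D : V → ℤ) : LinEquiv G D D := ⟨0, by rw [lap_zero, sub_self]⟩

lemma linEquiv_symm {D D' : V → ℤ} (h : LinEquiv G D D') : LinEquiv G D' D := by
  obtain ⟨f, hf⟩ := h
  exact ⟨-f, by rw [lap_neg, ← hf]; abel⟩

lemma linEquiv_trans {D D' D'' : V → ℤ} (h : LinEquiv G D D') (h' : LinEquiv G D' D'') :
    LinEquiv G D D'' := by
  obtain ⟨f, hf⟩ := h; obtain ⟨g, hg⟩ := h'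
  exact ⟨f + g, by rw [lap_add, ← hf, ← hg]; abel⟩

lemma linEquiv_degDiv {D D' : V → ℤ} (h : LinEquiv G D D') : degDiv D = degDiv D' := by
  obtain ⟨f, hf⟩ := h
  have := degDiv_lap G f
  rw [← hf, degDiv_sub] at this
  omega

lemma effective_degDiv_nonneg {E : V → ℤ} (h : Effective E) : 0 ≤ degDiv E :=
  Finset.sum_nonneg fun v _ => h v

lemma lsn_degDiv_nonneg {D : V → ℤ} (h : LinSysNonempty G D) : 0 ≤ degDiv D := by
  obtain ⟨E, hE, hDE⟩ := h
  rw [linEquiv_degDiv G hDE]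
  exact effective_degDiv_nonneg hE

lemma lsn_of_linEquiv {D D' : V → ℤ} (h : LinEquiv G D D') (h' : LinSysNonempty G D') :
    LinSysNonempty G D := by
  obtain ⟨E, hE, hDE⟩ := h'
  exact ⟨E, hE, linEquiv_trans G h hDE⟩

lemma lsn_add_effective {A B : V → ℤ} (h : LinSysNonempty G A) (hB : Effective B) :
    LinSysNonempty G (A + B) := by
  obtain ⟨E, hE, f, hf⟩ := h
  exact ⟨E + B, fun v => add_nonneg (hE v) (hB v), f, by rw [← hf]; abel⟩

end Basics

section Nu
set_option linter.unusedSectionVars false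

variable (G : SimpleGraph V) [DecidableRel G.Adj]

/-- The divisor attached to an injective "rank" function `σ`:
`ν(v) = #{w ∼ v : σ(w) < σ(v)} - 1`. -/
def nuDiv (σ : V → ℤ) : V → ℤ :=
  fun v => (((G.neighborFinset v).filter (fun w => σ w < σ v)).card : ℤ) - 1

lemma nu_filter_compl {σ : V → ℤ} (hσ : Function.Injective σ) (v : V) :
    ((G.neighborFinset v).filter (fun w => σ w < σ v)).card
      + ((G.neighborFinset v).filter (fun w => σ v < σ w)).card = G.degree v := by
  have h := Finset.card_filter_add_card_filter_not
    (s := G.neighborFinset v) (p := fun w => σ w < σ v)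
  have h2 : (G.neighborFinset v).filter (fun w => ¬ σ w < σ v)
      = (G.neighborFinset v).filter (fun w => σ v < σ w) := by
    apply Finset.filter_congr
    intro w hw
    have hne : w ≠ v := G.ne_of_adj (G.adj_symm (by simpa using hw))
    have hs : σ w ≠ σ v := fun h => hne (hσ h)
    simp only [not_lt, eq_iff_iff]
    omega
  rw [h2] at h
  rw [← SimpleGraph.card_neighborFinset_eq_degree]
  exact h

lemma nu_add_rev {σ : V → ℤ} (hσ : Function.Injective σ) :
    nuDiv G σ + nuDiv G (-σ) = canonicalDiv G := by
  funext v
  have h := nu_filter_compl G hσ v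
  have h2 : ((G.neighborFinset v).filter (fun w => (-σ) w < (-σ) v)).card
      = ((G.neighborFinset v).filter (fun w => σ v < σ w)).card := by
    congr 1
    apply Finset.filter_congr
    intro w _
    simp only [Pi.neg_apply, neg_lt_neg_iff, eq_iff_iff]
  simp only [nuDiv, Pi.add_apply, canonicalDiv, h2]
  have h3 := congrArg (fun x : ℕ => (x : ℤ)) h
  push_cast at h3 ⊢
  omega

lemma card_filter_nbr_eq_sum (p : V → Prop) [DecidablePred p] (v : V) :
    ((G.neighborFinset v).filter p).card
      = ∑ w : V, if G.Adj v w ∧ p w then 1 else 0 := by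
  rw [Finset.card_filter, SimpleGraph.neighborFinset_eq_filter, Finset.sum_filter]
  simp_rw [← ite_and]

lemma sum_nu_filter {σ : V → ℤ} (hσ : Function.Injective σ) :
    ∑ v : V, ((G.neighborFinset v).filter (fun w => σ w < σ v)).card
      = G.edgeFinset.card := by
  have key : ∑ v : V, ((G.neighborFinset v).filter (fun w => σ w < σ v)).card
      = ∑ v : V, ((G.neighborFinset v).filter (fun w => σ v < σ w)).card := by
    calc ∑ v : V, ((G.neighborFinset v).filter (fun w => σ w < σ v)).card
        = ∑ v : V, ∑ w : V, if G.Adj v w ∧ σ w < σ v then 1 else 0 := by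
          exact Finset.sum_congr rfl fun v _ => card_filter_nbr_eq_sum G _ v
      _ = ∑ w : V, ∑ v : V, if G.Adj v w ∧ σ w < σ v then 1 else 0 := Finset.sum_comm
      _ = ∑ v : V, ∑ w : V, if G.Adj w v ∧ σ v < σ w then 1 else 0 := rfl
      _ = ∑ v : V, ∑ w : V, if G.Adj v w ∧ σ v < σ w then 1 else 0 := by
          refine Finset.sum_congr rfl fun v _ => Finset.sum_congr rfl fun w _ => ?_
          exact if_congr (and_congr_left' (G.adj_comm w v)) rfl rfl
      _ = ∑ v : V, ((G.neighborFinset v).filter (fun w => σ v < σ w)).card := by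
          exact Finset.sum_congr rfl fun v _ => (card_filter_nbr_eq_sum G _ v).symm
  have h2 : ∑ v : V, ((G.neighborFinset v).filter (fun w => σ w < σ v)).card
      + ∑ v : V, ((G.neighborFinset v).filter (fun w => σ v < σ w)).card
      = 2 * G.edgeFinset.card := by
    rw [← Finset.sum_add_distrib]
    rw [← SimpleGraph.sum_degrees_eq_twice_card_edges]
    exact Finset.sum_congr rfl fun v _ => nu_filter_compl G hσ v
  omega

lemma degDiv_nu {σ : V → ℤ} (hσ : Function.Injective σ) :
    degDiv (nuDiv G σ) = (G.edgeFinset.card : ℤ) - (Fintype.card V : ℤ) := by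
  simp only [degDiv, nuDiv, Finset.sum_sub_distrib, Finset.sum_const, Finset.card_univ,
    nsmul_eq_mul, mul_one]
  rw [← Nat.cast_sum, sum_nu_filter G hσ]

lemma nu_not_lsn [Nonempty V] {σ : V → ℤ} (hσ : Function.Injective σ) :
    ¬ LinSysNonempty G (nuDiv G σ) := by
  rintro ⟨E, hE, f, hf⟩
  obtain ⟨vm, -, hvm⟩ := Finset.exists_max_image Finset.univ f Finset.univ_nonempty
  have hSne : (Finset.univ.filter (fun v => f v = f vm)).Nonempty :=
    ⟨vm, by simp⟩
  obtain ⟨v, hvS, hmin⟩ := Finset.exists_min_image _ σ hSne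
  have hfv : f v = f vm := by simpa using hvS
  have hterm : ∀ w ∈ (G.neighborFinset v).filter (fun w => σ w < σ v),
      (1 : ℤ) ≤ f v - f w := by
    intro w hw
    rw [Finset.mem_filter] at hw
    have hle : f w ≤ f vm := hvm w (Finset.mem_univ w)
    have : f w ≠ f vm := by
      intro h
      have := hmin w (by simp [h])
      omega
    omega
  have h1 : ((((G.neighborFinset v).filter (fun w => σ w < σ v)).card : ℤ))
      ≤ ∑ w ∈ (G.neighborFinset v).filter (fun w => σ w < σ v), (f v - f w) := by
    have := Finset.card_nsmul_le_sum
      ((G.neighborFinset v).filter (fun w => σ w < σ v)) (fun w => f v - f w) 1 hterm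
    simpa using this
  have h2 : ∑ w ∈ (G.neighborFinset v).filter (fun w => σ w < σ v), (f v - f w)
      ≤ ∑ w ∈ G.neighborFinset v, (f v - f w) := by
    apply Finset.sum_le_sum_of_subset_of_nonneg (Finset.filter_subset _ _)
    intro w _ _
    have := hvm w (Finset.mem_univ w)
    omega
  have h3 : lapDiv G f v = nuDiv G σ v - E v := by rw [← hf]; simp
  rw [lap_apply] at h3
  have hEv := hE v
  simp only [nuDiv] at h3
  omega

end Nu

section DegPlus
set_option linter.unusedSectionVars false

/-- `deg⁺(H) = Σ_v max(H v, 0)`. -/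
def degPlus (H : V → ℤ) : ℤ := ∑ v : V, max (H v) 0

lemma degPlus_nonneg (H : V → ℤ) : 0 ≤ degPlus H :=
  Finset.sum_nonneg fun v _ => le_max_right _ _

lemma degPlus_sub_neg (H : V → ℤ) : degPlus H - degPlus (-H) = degDiv H := by
  rw [degPlus, degPlus, ← Finset.sum_sub_distrib]
  exact Finset.sum_congr rfl fun v _ => by simp only [Pi.neg_apply]; omega

lemma degPlus_le_of_le {F H : V → ℤ} (hF : Effective F) (h : ∀ v, H v ≤ F v) :
    degPlus H ≤ degDiv F :=
  Finset.sum_le_sum fun v _ => by have := hF v; have := h v; omega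

lemma posPart_effective (H : V → ℤ) : Effective (fun v => max (H v) 0) :=
  fun v => le_max_right _ _

end DegPlus

section Indic
set_option linter.unusedSectionVars false

variable (G : SimpleGraph V) [DecidableRel G.Adj]

/-- Integer indicator function of a finite set of vertices. -/
def indic (A : Finset V) : V → ℤ := fun v => if v ∈ A then 1 else 0

lemma sum_indic_nbr (A : Finset V) (v : V) :
    ∑ w ∈ G.neighborFinset v, indic A w = ((G.neighborFinset v ∩ A).card : ℤ) := by
  simp only [indic]
  rw [Finset.sum_ite_mem]
  simp

lemma lap_indic_mem (A : Finset V) {v : V} (hv : v ∈ A) :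
    lapDiv G (indic A) v = ((G.neighborFinset v \ A).card : ℤ) := by
  rw [lapDiv, sum_indic_nbr]
  simp only [indic, hv, if_true, mul_one]
  have h := Finset.card_inter_add_card_sdiff (G.neighborFinset v) A
  rw [SimpleGraph.card_neighborFinset_eq_degree] at h
  push_cast [← h]
  ring

lemma lap_indic_not_mem (A : Finset V) {v : V} (hv : v ∉ A) :
    lapDiv G (indic A) v = -((G.neighborFinset v ∩ A).card : ℤ) := by
  rw [lapDiv, sum_indic_nbr]
  simp [indic, hv]

lemma indic_nonneg (A : Finset V) (v : V) : 0 ≤ indic A v := by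
  rw [indic]; split <;> omega

end Indic

section Kernel
set_option linter.unusedSectionVars false

variable (G : SimpleGraph V) [DecidableRel G.Adj]

lemma lap_eq_zero_const (hG : G.Connected) {f : V → ℤ} (hf : lapDiv G f = 0) (v w : V) :
    f v = f w := by
  have : Nonempty V := ⟨v⟩
  obtain ⟨vm, -, hvm⟩ := Finset.exists_max_image Finset.univ f Finset.univ_nonempty
  have closed : ∀ u, f u = f vm → ∀ u', G.Adj u u' → f u' = f vm := by
    intro u hu u' hadj
    have h0 : lapDiv G f u = 0 := congrFun hf u
    rw [lap_apply] at h0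
    have hnn : ∀ x ∈ G.neighborFinset u, 0 ≤ f u - f x := by
      intro x _
      have := hvm x (Finset.mem_univ x)
      omega
    have hz := (Finset.sum_eq_zero_iff_of_nonneg hnn).mp h0 u'
      (by rwa [SimpleGraph.mem_neighborFinset])
    omega
  have all : ∀ (a b : V) (p : G.Walk a b), f a = f vm → f b = f vm := by
    intro a b p
    induction p with
    | nil => exact id
    | cons h q ih => intro ha; exact ih (closed _ ha _ h)
  obtain ⟨p⟩ := hG.preconnected vm v
  obtain ⟨q⟩ := hG.preconnected vm w
  rw [all vm v p rfl, all vm w q rfl]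

end Kernel

section Step1
set_option linter.unusedSectionVars false

variable (G : SimpleGraph V) [DecidableRel G.Adj]

lemma exists_equiv_nonneg_off (hG : G.Connected) (D : V → ℤ) (v₀ : V) :
    ∃ D', LinEquiv G D D' ∧ ∀ v, v ≠ v₀ → 0 ≤ D' v := by
  classical
  have hNV : Nonempty V := ⟨v₀⟩
  set n : ℕ := Fintype.card V with hn
  have hn1 : 1 ≤ n := Fintype.card_pos
  set T : ℤ := ∑ v : V, max (-D v) 0 with hT
  have hT0 : 0 ≤ T := Finset.sum_nonneg fun v _ => le_max_right _ _
  have hTv : ∀ v, -D v ≤ T := by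
    intro v
    calc -D v ≤ max (-D v) 0 := le_max_left _ _
    _ ≤ T := Finset.single_le_sum (f := fun v => max (-D v) 0)
        (fun w _ => le_max_right _ _) (Finset.mem_univ v)
  set a : ℕ → ℤ := fun j => T * (n : ℤ) ^ (n - j) with ha
  have ha0 : ∀ j, 0 ≤ a j := fun j => mul_nonneg hT0 (pow_nonneg (by positivity) _)
  set A : ℕ → ℤ := fun t => ∑ j ∈ Finset.range t, a (j + 1) with hA
  have hAmono : ∀ s t, s ≤ t → A s ≤ A t := by
    intro s t hst
    apply Finset.sum_le_sum_of_subset_of_nonneg (Finset.range_subset_range.mpr hst)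
    intro j _ _; exact ha0 _
  have hAsucc : ∀ t, A (t + 1) = A t + a (t + 1) := fun t => Finset.sum_range_succ _ t
  set f : V → ℤ := fun v => -(A (G.dist v₀ v)) with hf
  refine ⟨D - lapDiv G f, ⟨f, by abel⟩, ?_⟩
  intro v hv
  suffices hkey : lapDiv G f v ≤ -T by
    have := hTv v; simp only [Pi.sub_apply]; omega
  set d : ℕ := G.dist v₀ v with hd
  have hd1 : 1 ≤ d := hG.pos_dist_of_ne (Ne.symm hv)
  have hdlt : d < n := by
    obtain ⟨p, hp, hl⟩ := hG.exists_path_of_dist v₀ v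
    rw [hd, ← hl]
    exact hp.length_lt
  -- find a neighbor strictly closer to v₀
  obtain ⟨p, hp⟩ := hG.exists_walk_length_eq_dist v₀ v
  have hu : ∃ u, G.Adj v u ∧ G.dist v₀ u + 1 ≤ d := by
    obtain ⟨u, h, q, hpr⟩ := SimpleGraph.Walk.exists_eq_cons_of_ne hv p.reverse
    refine ⟨u, h, ?_⟩
    have hlen : q.length + 1 = d := by
      have h5 := congrArg SimpleGraph.Walk.length hpr
      rw [SimpleGraph.Walk.length_reverse, hp] at h5
      simpa using h5.symm
    have : G.dist v₀ u ≤ q.length := by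
      rw [SimpleGraph.dist_comm]
      exact SimpleGraph.dist_le q
    omega
  obtain ⟨u, hadj, hud⟩ := hu
  have hnbr : ∀ w, G.Adj v w → G.dist v₀ w ≤ d + 1 := by
    intro w hw
    calc G.dist v₀ w ≤ G.dist v₀ v + G.dist v w := hG.dist_triangle
    _ = d + 1 := by rw [← hd, SimpleGraph.dist_eq_one_iff_adj.mpr hw]
  set e : ℕ := d - 1 with he
  have hde : d = e + 1 := by omega
  have hu_mem : u ∈ G.neighborFinset v := by rwa [SimpleGraph.mem_neighborFinset]
  rw [lap_apply]
  rw [← Finset.add_sum_erase _ _ hu_mem]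
  have hterm1 : f v - f u ≤ -(a (e + 1)) := by
    simp only [hf]
    have h1 : A (G.dist v₀ u) ≤ A e := hAmono _ _ (by omega)
    have h2 : A d = A e + a (e + 1) := by rw [hde]; exact hAsucc e
    rw [← hd]
    omega
  have hterm2 : ∑ w ∈ (G.neighborFinset v).erase u, (f v - f w)
      ≤ ((G.degree v - 1 : ℕ) : ℤ) * a (e + 2) := by
    have hb : ∀ w ∈ (G.neighborFinset v).erase u, f v - f w ≤ a (e + 2) := by
      intro w hw
      have hw' : G.Adj v w := by
        have := Finset.mem_of_mem_erase hw
        rwa [SimpleGraph.mem_neighborFinset] at this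
      have h3 : A (G.dist v₀ w) ≤ A (d + 1) := hAmono _ _ (hnbr w hw')
      have h4 : A (d + 1) = A d + a (e + 2) := by
        have h5 := hAsucc d
        have h6 : a (d + 1) = a (e + 2) := by rw [show d + 1 = e + 2 from by omega]
        omega
      simp only [hf, ← hd]
      omega
    have := Finset.sum_le_card_nsmul _ _ _ hb
    rwa [Finset.card_erase_of_mem hu_mem, SimpleGraph.card_neighborFinset_eq_degree,
      nsmul_eq_mul] at this
  have hdeg1 : 1 ≤ G.degree v := by
    have : 0 < (G.neighborFinset v).card := Finset.card_pos.mpr ⟨u, hu_mem⟩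
    rwa [SimpleGraph.card_neighborFinset_eq_degree] at this
  have hdegn : G.degree v ≤ n - 1 := by
    have := G.degree_lt_card_verts v
    omega
  -- arithmetic
  have hcast : ((G.degree v - 1 : ℕ) : ℤ) = (G.degree v : ℤ) - 1 := by
    push_cast [Nat.cast_sub hdeg1]; ring
  have hae1 : a (e + 1) = T * (n : ℤ) ^ (n - e - 2) * n := by
    simp only [ha]
    have : n - (e + 1) = (n - e - 2) + 1 := by omega
    rw [this, pow_succ]
    ring
  have hae2 : a (e + 2) = T * (n : ℤ) ^ (n - e - 2) := by
    simp only [ha, Nat.sub_sub]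
  have hpow1 : (1 : ℤ) ≤ (n : ℤ) ^ (n - e - 2) :=
    one_le_pow₀ (by exact_mod_cast hn1)
  set P : ℤ := (n : ℤ) ^ (n - e - 2) with hP
  have hP0 : 0 ≤ P := by omega
  have hdegZ : (G.degree v : ℤ) ≤ (n : ℤ) - 1 := by
    have : ((G.degree v : ℕ) : ℤ) ≤ ((n - 1 : ℕ) : ℤ) := by exact_mod_cast hdegn
    rwa [Nat.cast_sub hn1] at this
  calc (f v - f u) + ∑ w ∈ (G.neighborFinset v).erase u, (f v - f w)
      ≤ -(a (e + 1)) + ((G.degree v - 1 : ℕ) : ℤ) * a (e + 2) := by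
        exact add_le_add hterm1 hterm2
    _ ≤ -T := by
        rw [hae1, hae2, hcast]
        have key : ((G.degree v : ℤ) - 1) * (T * P) + T ≤ T * P * (n : ℤ) := by
          nlinarith [mul_nonneg hT0 hP0, mul_nonneg (mul_nonneg hT0 hP0) (sub_nonneg.mpr hpow1)]
        linarith
end Step1

section Stuck
set_option linter.unusedSectionVars false

variable (G : SimpleGraph V) [DecidableRel G.Adj]

lemma lap_sum {ι : Type} (s : Finset ι) (f : ι → V → ℤ) :
    lapDiv G (∑ t ∈ s, f t) = ∑ t ∈ s, lapDiv G (f t) := by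
  classical
  induction s using Finset.induction_on with
  | empty => simp [lap_zero]
  | insert _ _ hx ih =>
      rw [Finset.sum_insert hx, Finset.sum_insert hx, lap_add, ih]

lemma telescope_sum (u : ℕ → V → ℤ) (i j : ℕ) (h : i ≤ j) :
    ∑ t ∈ Finset.Ico i j, (u t - u (t + 1)) = u i - u j := by
  induction j, h using Nat.le_induction with
  | base => simp
  | succ j hij ih => rw [Finset.sum_Ico_succ_top hij, ih]; abel

lemma exists_stuck (hG : G.Connected) (D : V → ℤ) (v₀ : V) :
    ∃ D', LinEquiv G D D' ∧ (∀ v, v ≠ v₀ → 0 ≤ D' v) ∧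
      ∀ A : Finset V, A.Nonempty → v₀ ∉ A →
        ∃ v ∈ A, D' v < ((G.neighborFinset v \ A).card : ℤ) := by
  classical
  obtain ⟨D₁, hD₁e, hD₁n⟩ := exists_equiv_nonneg_off G hG D v₀
  by_contra hcon
  push_neg at hcon
  set S₁ : Set (V → ℤ) :=
    {E | LinEquiv G D E ∧ (∀ v, v ≠ v₀ → 0 ≤ E v) ∧ D₁ v₀ ≤ E v₀} with hS₁
  have step : ∀ E : V → ℤ, E ∈ S₁ → ∃ A : Finset V, A.Nonempty ∧ v₀ ∉ A ∧
      E - lapDiv G (indic A) ∈ S₁ := by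
    intro E hE
    obtain ⟨hE1, hE2, hE3⟩ := hE
    obtain ⟨A, hAne, hAv₀, hAcond⟩ := hcon E hE1 hE2
    refine ⟨A, hAne, hAv₀, ?_, ?_, ?_⟩
    · exact linEquiv_trans G hE1 ⟨indic A, by abel⟩
    · intro v hv
      by_cases hvA : v ∈ A
      · rw [Pi.sub_apply, lap_indic_mem G A hvA]
        have := hAcond v hvA; omega
      · rw [Pi.sub_apply, lap_indic_not_mem G A hvA]
        have h1 := hE2 v hv
        have h2 : (0 : ℤ) ≤ ((G.neighborFinset v ∩ A).card : ℤ) := Int.natCast_nonneg _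
        omega
    · rw [Pi.sub_apply, lap_indic_not_mem G A hAv₀]
      have h2 : (0 : ℤ) ≤ ((G.neighborFinset v₀ ∩ A).card : ℤ) := Int.natCast_nonneg _
      omega
  choose Af hAne hAv₀ hmem using step
  have hfin : S₁.Finite := by
    set dD := degDiv D with hdD
    set lo : ℤ := min (D₁ v₀) 0 with hlo
    set hi : ℤ := max dD (dD - D₁ v₀) with hhi
    apply Set.Finite.subset (Set.Finite.pi (fun v : V => Set.finite_Icc lo hi))
    intro E hE
    rw [Set.mem_univ_pi]
    intro v
    obtain ⟨hE1, hE2, hE3⟩ := hE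
    have hsum : degDiv E = dD := (linEquiv_degDiv G hE1).symm
    have hEv : E v = dD - ∑ w ∈ Finset.univ.erase v, E w := by
      rw [← hsum, degDiv, ← Finset.add_sum_erase _ _ (Finset.mem_univ v)]
      ring
    rw [Set.mem_Icc]
    constructor
    · by_cases hv : v = v₀
      · rw [hv]; omega
      · have := hE2 v hv; omega
    · by_cases hv : v = v₀
      · rw [hv] at hEv ⊢
        have hpos : 0 ≤ ∑ w ∈ Finset.univ.erase v₀, E w :=
          Finset.sum_nonneg fun w hw => hE2 w (Finset.ne_of_mem_erase hw)
        omega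
      · have hv₀mem : v₀ ∈ Finset.univ.erase v := by simp [Ne.symm hv]
        have h1 : ∑ w ∈ Finset.univ.erase v, E w
            = E v₀ + ∑ w ∈ (Finset.univ.erase v).erase v₀, E w :=
          (Finset.add_sum_erase _ _ hv₀mem).symm
        have hpos : 0 ≤ ∑ w ∈ (Finset.univ.erase v).erase v₀, E w :=
          Finset.sum_nonneg fun w hw => hE2 w (Finset.ne_of_mem_erase hw)
        omega
  have hfinsub : Finite ↥S₁ := hfin.to_subtype
  have hD₁mem : D₁ ∈ S₁ := ⟨hD₁e, hD₁n, le_refl _⟩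
  set g : ↥S₁ → ↥S₁ := fun E => ⟨E.1 - lapDiv G (indic (Af E.1 E.2)), hmem E.1 E.2⟩ with hg
  set seq : ℕ → ↥S₁ := fun k => g^[k] ⟨D₁, hD₁mem⟩ with hseqdef
  have hstep_eq : ∀ t, (seq (t + 1)).1
      = (seq t).1 - lapDiv G (indic (Af (seq t).1 (seq t).2)) := by
    intro t
    have h : seq (t + 1) = g (seq t) := by
      rw [hseqdef]; exact Function.iterate_succ_apply' g t _
    rw [h]
  obtain ⟨i0, j0, hne, heq⟩ := Finite.exists_ne_map_eq_of_infinite seq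
  obtain ⟨i, j, hlt, hseq⟩ : ∃ i j, i < j ∧ seq i = seq j := by
    rcases lt_or_gt_of_ne hne with h | h
    · exact ⟨i0, j0, h, heq⟩
    · exact ⟨j0, i0, h, heq.symm⟩
  set F : V → ℤ := ∑ t ∈ Finset.Ico i j, indic (Af (seq t).1 (seq t).2) with hF
  have hlapF : lapDiv G F = 0 := by
    rw [hF, lap_sum]
    have h : ∀ t ∈ Finset.Ico i j, lapDiv G (indic (Af (seq t).1 (seq t).2))
        = (fun s => (seq s).1) t - (fun s => (seq s).1) (t + 1) := by
      intro t _
      show lapDiv G (indic (Af (seq t).1 (seq t).2)) = (seq t).1 - (seq (t + 1)).1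
      rw [hstep_eq t]; abel
    rw [Finset.sum_congr rfl h, telescope_sum _ i j (le_of_lt hlt), hseq, sub_self]
  have hconst : ∀ v, F v = F v₀ := fun v => lap_eq_zero_const G hG hlapF v v₀
  have hFv₀ : F v₀ = 0 := by
    rw [hF, Finset.sum_apply]
    exact Finset.sum_eq_zero fun t _ => by
      simp [indic, hAv₀ (seq t).1 (seq t).2]
  obtain ⟨v, hvA⟩ := hAne (seq i).1 (seq i).2
  have hFv : 1 ≤ F v := by
    rw [hF, Finset.sum_apply]
    calc (1 : ℤ) = indic (Af (seq i).1 (seq i).2) v := by simp [indic, hvA]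
    _ ≤ ∑ t ∈ Finset.Ico i j, indic (Af (seq t).1 (seq t).2) v := by
        apply Finset.single_le_sum (f := fun t => indic (Af (seq t).1 (seq t).2) v)
        · intro t _; exact indic_nonneg _ v
        · rw [Finset.mem_Ico]; omega
  have := hconst v
  omega

end Stuck

section Burn
set_option linter.unusedSectionVars false


/-- Burning sequences: lists of burnt vertices (most recent first), starting from `v₀`. -/
inductive BurnOk (G : SimpleGraph V) [DecidableRel G.Adj] (D' : V → ℤ) (v₀ : V) : List V → Prop
  | base : BurnOk G D' v₀ [v₀]
  | step (v : V) (l : List V) : BurnOk G D' v₀ l → v ∉ l →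
      (D' v < ((G.neighborFinset v ∩ l.toFinset).card : ℤ)) → BurnOk G D' v₀ (v :: l)

variable (G : SimpleGraph V) [DecidableRel G.Adj]

lemma burn_mem_v₀ {D' : V → ℤ} {v₀ : V} {l : List V} (h : BurnOk G D' v₀ l) : v₀ ∈ l := by
  induction h with
  | base => simp
  | step v l _ _ _ ih => exact List.mem_cons_of_mem v ih

lemma burn_complete {D' : V → ℤ} {v₀ : V}
    (hstuck : ∀ A : Finset V, A.Nonempty → v₀ ∉ A →
      ∃ v ∈ A, D' v < ((G.neighborFinset v \ A).card : ℤ)) :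
    ∃ l, BurnOk G D' v₀ l ∧ l.toFinset = Finset.univ := by
  suffices h : ∀ (k : ℕ) (l : List V), BurnOk G D' v₀ l →
      Fintype.card V ≤ l.toFinset.card + k →
      ∃ l', BurnOk G D' v₀ l' ∧ l'.toFinset = Finset.univ by
    exact h (Fintype.card V) [v₀] BurnOk.base (by omega)
  intro k
  induction k with
  | zero =>
      intro l hl hcard
      refine ⟨l, hl, Finset.eq_univ_of_card _ ?_⟩
      have h2 : l.toFinset.card ≤ Fintype.card V := Finset.card_le_univ _
      omega
  | succ k ih =>
      intro l hl hcard
      by_cases hu : l.toFinset = Finset.univ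
      · exact ⟨l, hl, hu⟩
      · have hAne : (Finset.univ \ l.toFinset).Nonempty := by
          rw [Finset.sdiff_nonempty]
          intro hsub
          exact hu (Finset.univ_subset_iff.mp hsub)
        have hAv₀ : v₀ ∉ Finset.univ \ l.toFinset := by
          simp only [Finset.mem_sdiff, Finset.mem_univ, true_and, not_not]
          rw [List.mem_toFinset]
          exact burn_mem_v₀ G hl
        obtain ⟨v, hvA, hvlt⟩ := hstuck _ hAne hAv₀
        have hval : G.neighborFinset v \ (Finset.univ \ l.toFinset)
            = G.neighborFinset v ∩ l.toFinset := by
          ext w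
          simp only [Finset.mem_sdiff, Finset.mem_inter, Finset.mem_univ, true_and, not_not]
        have hvnot : v ∉ l := by
          have := (Finset.mem_sdiff.mp hvA).2
          rwa [List.mem_toFinset] at this
        rw [hval] at hvlt
        refine ih (v :: l) (BurnOk.step v l hl hvnot hvlt) ?_
        rw [List.toFinset_cons, Finset.card_insert_of_notMem (by rwa [List.mem_toFinset])]
        omega

lemma burn_props {D' : V → ℤ} {v₀ : V} {l : List V} (h : BurnOk G D' v₀ l) :
    ∀ v ∈ l, v ≠ v₀ →
      (l.idxOf v < l.idxOf v₀ ∧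
       D' v < ((((G.neighborFinset v) ∩ l.toFinset).filter
          (fun w => l.idxOf v < l.idxOf w)).card : ℤ)) := by
  induction h with
  | base =>
      intro v hv hne
      simp only [List.mem_singleton] at hv
      exact absurd hv hne
  | step u l hl hunot hucard ih =>
      intro v hv hne
      have hv₀l : v₀ ∈ l := burn_mem_v₀ G hl
      have huv₀ : u ≠ v₀ := fun h => hunot (h ▸ hv₀l)
      rcases List.mem_cons.mp hv with rfl | hvl
      · constructor
        · rw [List.idxOf_cons_self, List.idxOf_cons_ne _ huv₀]
          omega
        · refine lt_of_lt_of_le hucard ?_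
          have hsub : G.neighborFinset v ∩ l.toFinset ⊆
              ((G.neighborFinset v ∩ (v :: l).toFinset).filter
                (fun w => (v :: l).idxOf v < (v :: l).idxOf w)) := by
            intro w hw
            rw [Finset.mem_inter] at hw
            have hwl : w ∈ l := List.mem_toFinset.mp hw.2
            have hwv : v ≠ w := fun h => hunot (h ▸ hwl)
            rw [Finset.mem_filter, Finset.mem_inter, List.toFinset_cons, Finset.mem_insert,
              List.idxOf_cons_self, List.idxOf_cons_ne _ hwv]
            exact ⟨⟨hw.1, Or.inr hw.2⟩, by omega⟩
          exact_mod_cast Nat.cast_le.mpr (Finset.card_le_card hsub)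
      · obtain ⟨ihR, ihQ⟩ := ih v hvl hne
        have huv : u ≠ v := fun h => hunot (h ▸ hvl)
        constructor
        · rw [List.idxOf_cons_ne _ huv, List.idxOf_cons_ne _ huv₀]
          omega
        · refine lt_of_lt_of_le ihQ ?_
          have hsub : ((G.neighborFinset v ∩ l.toFinset).filter
                (fun w => l.idxOf v < l.idxOf w)) ⊆
              ((G.neighborFinset v ∩ (u :: l).toFinset).filter
                (fun w => (u :: l).idxOf v < (u :: l).idxOf w)) := by
            intro w hw
            rw [Finset.mem_filter, Finset.mem_inter] at hw
            have hwl : w ∈ l := List.mem_toFinset.mp hw.1.2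
            have huw : u ≠ w := fun h => hunot (h ▸ hwl)
            rw [Finset.mem_filter, Finset.mem_inter, List.toFinset_cons, Finset.mem_insert,
              List.idxOf_cons_ne _ huv, List.idxOf_cons_ne _ huw]
            refine ⟨⟨hw.1.1, Or.inr hw.1.2⟩, ?_⟩
            have := hw.2
            omega
          exact_mod_cast Nat.cast_le.mpr (Finset.card_le_card hsub)

lemma burn_nu {D' : V → ℤ} {v₀ : V} (hneg : D' v₀ < 0)
    (hstuck : ∀ A : Finset V, A.Nonempty → v₀ ∉ A →
      ∃ v ∈ A, D' v < ((G.neighborFinset v \ A).card : ℤ)) :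
    ∃ σ : V → ℤ, Function.Injective σ ∧ ∀ v, D' v ≤ nuDiv G σ v := by
  obtain ⟨l, hl, hluniv⟩ := burn_complete G hstuck
  have hmem : ∀ v : V, v ∈ l := fun v => by
    rw [← List.mem_toFinset, hluniv]; exact Finset.mem_univ v
  refine ⟨fun v => -(l.idxOf v : ℤ), ?_, ?_⟩
  · intro x y hxy
    simp only [neg_inj, Nat.cast_inj] at hxy
    exact (List.idxOf_inj (hmem x)).mp hxy
  · intro v
    by_cases hv : v = v₀
    · subst hv
      have hempty : (G.neighborFinset v).filter
          (fun w => -(l.idxOf w : ℤ) < -(l.idxOf v : ℤ)) = ∅ := by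
        rw [Finset.filter_eq_empty_iff]
        intro w hw
        have hwv : w ≠ v := G.ne_of_adj (G.adj_symm (by rwa [← SimpleGraph.mem_neighborFinset]))
        have := (burn_props G hl w (hmem w) hwv).1
        omega
      rw [nuDiv, hempty]
      simp only [Finset.card_empty, Nat.cast_zero]
      omega
    · have hQ := (burn_props G hl v (hmem v) hv).2
      rw [hluniv, Finset.inter_univ] at hQ
      have hfe : (G.neighborFinset v).filter (fun w => l.idxOf v < l.idxOf w)
          = (G.neighborFinset v).filter
            (fun w => -(l.idxOf w : ℤ) < -(l.idxOf v : ℤ)) := by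
        apply Finset.filter_congr
        intro w _
        simp only [eq_iff_iff, neg_lt_neg_iff, Nat.cast_lt]
      rw [hfe] at hQ
      rw [nuDiv]
      omega

end Burn

section Key
set_option linter.unusedSectionVars false

variable (G : SimpleGraph V) [DecidableRel G.Adj]

theorem key_dichotomy (hG : G.Connected) (D : V → ℤ) :
    ¬ LinSysNonempty G D ↔
      ∃ σ : V → ℤ, Function.Injective σ ∧ LinSysNonempty G (nuDiv G σ - D) := by
  have hNV : Nonempty V := hG.nonempty
  constructor
  · intro hno
    obtain ⟨v₀⟩ := hNV
    obtain ⟨D', hde, hdn, hstuck⟩ := exists_stuck G hG D v₀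
    have hneg : D' v₀ < 0 := by
      by_contra hge
      push_neg at hge
      refine hno ⟨D', fun v => ?_, hde⟩
      by_cases h : v = v₀
      · rw [h]; exact hge
      · exact hdn v h
    obtain ⟨σ, hσ, hle⟩ := burn_nu G hneg hstuck
    obtain ⟨f, hf⟩ := hde
    refine ⟨σ, hσ, nuDiv G σ - D', fun v => ?_, ⟨-f, ?_⟩⟩
    · have := hle v
      simp only [Pi.sub_apply]
      omega
    · rw [lap_neg, ← hf]; abel
  · rintro ⟨σ, hσ, E₂, hE₂, f₂, hf₂⟩ ⟨E₁, hE₁, f₁, hf₁⟩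
    apply nu_not_lsn G hσ
    refine ⟨E₁ + E₂, fun v => add_nonneg (hE₁ v) (hE₂ v), f₁ + f₂, ?_⟩
    rw [lap_add, ← hf₁, ← hf₂]; abel

end Key

section Rank
set_option linter.unusedSectionVars false

variable (G : SimpleGraph V) [DecidableRel G.Adj]

/-- Degrees of effective divisors `F` with empty `|D - F|`. -/
def badSet (D : V → ℤ) : Set ℤ :=
  {k | ∃ F : V → ℤ, Effective F ∧ degDiv F = k ∧ ¬ LinSysNonempty G (D - F)}

lemma badSet_lb (D : V → ℤ) : ∀ k ∈ badSet G D, (0 : ℤ) ≤ k := by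
  rintro k ⟨F, hF, rfl, -⟩
  exact effective_degDiv_nonneg hF

lemma badSet_bdd (D : V → ℤ) : BddBelow (badSet G D) :=
  ⟨0, fun k hk => badSet_lb G D k hk⟩

lemma badSet_nonempty [Nonempty V] (D : V → ℤ) : (badSet G D).Nonempty := by
  refine ⟨degDiv (fun v => max (D v) 0 + 1), fun v => max (D v) 0 + 1,
    fun v => by dsimp; omega, rfl, ?_⟩
  intro hlsn
  have h := lsn_degDiv_nonneg G hlsn
  rw [degDiv_sub] at h
  have h1 : degDiv D ≤ degDiv (fun v => max (D v) 0) :=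
    Finset.sum_le_sum fun v _ => le_max_left _ _
  have h2 : degDiv (fun v => max (D v) 0 + 1)
      = degDiv (fun v => max (D v) 0) + (Fintype.card V : ℤ) := by
    rw [degDiv, degDiv, Finset.sum_add_distrib]
    simp [Finset.card_univ]
  have h3 : 1 ≤ Fintype.card V := Fintype.card_pos
  have h4 : (1 : ℤ) ≤ (Fintype.card V : ℤ) := by exact_mod_cast h3
  omega

lemma divRank_eq_sInf_badSet [Nonempty V] (D : V → ℤ) :
    divRank G D = sInf (badSet G D) - 1 := by
  classical
  set t := sInf (badSet G D) with ht
  have htmem := Int.csInf_mem (badSet_nonempty G D) (badSet_bdd G D)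
  have ht0 : 0 ≤ t := badSet_lb G D t htmem
  obtain ⟨F₀, hF₀e, hF₀d, hF₀no⟩ := htmem
  set S : Set ℤ := {-1} ∪ {k : ℤ | 0 ≤ k ∧ ∀ F : V → ℤ, Effective F → degDiv F = k →
    LinSysNonempty G (D - F)} with hS
  have hub : ∀ k ∈ S, k ≤ t - 1 := by
    intro k hk
    rcases hk with hk | ⟨hk0, hkall⟩
    · rw [Set.mem_singleton_iff] at hk; omega
    · by_contra hgt
      push_neg at hgt
      have htk : t ≤ k := by omega
      obtain ⟨v₁⟩ := (inferInstance : Nonempty V)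
      set F₁ : V → ℤ := fun v => F₀ v + if v = v₁ then (k - t) else 0 with hF₁
      have hF₁e : Effective F₁ := fun v => by
        have := hF₀e v; simp only [hF₁]; split <;> omega
      have hF₁d : degDiv F₁ = k := by
        rw [degDiv]
        simp only [hF₁]
        rw [Finset.sum_add_distrib, Finset.sum_ite_eq' Finset.univ v₁ (fun _ => k - t)]
        simp only [Finset.mem_univ, if_true]
        have : ∑ v : V, F₀ v = t := by rw [ht, ← hF₀d, degDiv]
        omega
      have hlsn := hkall F₁ hF₁e hF₁d
      apply hF₀no
      have heff : Effective (F₁ - F₀) := fun v => by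
        simp only [hF₁, Pi.sub_apply]; split <;> omega
      have := lsn_add_effective G hlsn heff
      rwa [show (D - F₁) + (F₁ - F₀) = D - F₀ by abel] at this
  have hmem2 : t - 1 ∈ S := by
    by_cases ht1 : t = 0
    · left; rw [Set.mem_singleton_iff]; omega
    · right
      refine ⟨by omega, ?_⟩
      intro F hFe hFd
      by_contra hno
      have hmem : degDiv F ∈ badSet G D := ⟨F, hFe, rfl, hno⟩
      have := csInf_le (badSet_bdd G D) hmem
      omega
  rw [divRank]
  exact le_antisymm (csSup_le ⟨-1, Or.inl rfl⟩ hub) (le_csSup ⟨t - 1, hub⟩ hmem2)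

/-- The set of `deg⁺(D - ν_σ + L f)`. -/
def TSet (D : V → ℤ) : Set ℤ :=
  {x | ∃ σ : V → ℤ, Function.Injective σ ∧ ∃ f : V → ℤ,
    x = degPlus (D - nuDiv G σ + lapDiv G f)}

lemma TSet_nonempty (D : V → ℤ) : (TSet G D).Nonempty := by
  refine ⟨_, fun v => ((Fintype.equivFin V v : ℕ) : ℤ), ?_, 0, rfl⟩
  intro x y hxy
  simp only [Nat.cast_inj] at hxy
  exact (Fintype.equivFin V).injective (Fin.val_injective hxy)

lemma TSet_bdd (D : V → ℤ) : BddBelow (TSet G D) := by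
  refine ⟨0, ?_⟩
  rintro x ⟨σ, hσ, f, rfl⟩
  exact degPlus_nonneg _

lemma sInf_badSet_eq_sInf_TSet (hG : G.Connected) (D : V → ℤ) :
    sInf (badSet G D) = sInf (TSet G D) := by
  have hNV : Nonempty V := hG.nonempty
  have hsub : TSet G D ⊆ badSet G D := by
    rintro x ⟨σ, hσ, f, rfl⟩
    set H : V → ℤ := D - nuDiv G σ + lapDiv G f with hH
    refine ⟨fun v => max (H v) 0, posPart_effective H, rfl, ?_⟩
    rw [key_dichotomy G hG]
    refine ⟨σ, hσ, (fun v => max (H v) 0) - H, fun v => by simp only [Pi.sub_apply]; omega,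
      f, ?_⟩
    rw [hH]; abel
  have h1 : sInf (badSet G D) ≤ sInf (TSet G D) :=
    csInf_le_csInf (badSet_bdd G D) (TSet_nonempty G D) hsub
  have h2 : sInf (TSet G D) ≤ sInf (badSet G D) := by
    have hmem := Int.csInf_mem (badSet_nonempty G D) (badSet_bdd G D)
    obtain ⟨F, hFe, hFd, hFno⟩ := hmem
    rw [key_dichotomy G hG] at hFno
    obtain ⟨σ, hσ, E, hE, f, hf⟩ := hFno
    set H : V → ℤ := D - nuDiv G σ + lapDiv G f with hH
    have hFH : ∀ v, H v ≤ F v := by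
      intro v
      have h5 := hE v
      have h6 := congrFun hf v
      simp only [hH, Pi.sub_apply, Pi.add_apply] at h6 ⊢
      omega
    calc sInf (TSet G D) ≤ degPlus H := csInf_le (TSet_bdd G D) ⟨σ, hσ, f, rfl⟩
      _ ≤ degDiv F := degPlus_le_of_le hFe hFH
      _ = sInf (badSet G D) := hFd
  omega

lemma divRank_add_one (hG : G.Connected) (D : V → ℤ) :
    divRank G D + 1 = sInf (TSet G D) := by
  have hNV : Nonempty V := hG.nonempty
  rw [divRank_eq_sInf_badSet G D, sInf_badSet_eq_sInf_TSet G hG D]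
  ring

end Rank

section Final
set_option linter.unusedSectionVars false


/-- **Riemann–Roch for graphs** (Baker–Norine): for a connected finite simple graph `G` with
`n` vertices and `m` edges and every divisor `D`,
`r(D) - r(K - D) = deg(D) + n - m`. -/
theorem riemann_roch (G : SimpleGraph V) [DecidableRel G.Adj] (hG : G.Connected)
    (D : V → ℤ) :
    divRank G D - divRank G (canonicalDiv G - D) =
      degDiv D + (Fintype.card V : ℤ) - (G.edgeFinset.card : ℤ) := by
  have hNV : Nonempty V := hG.nonempty
  set m : ℤ := (G.edgeFinset.card : ℤ) with hm
  set n : ℤ := (Fintype.card V : ℤ) with hn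
  set K : V → ℤ := canonicalDiv G with hK
  set c : ℤ := degDiv D + n - m with hc
  have hσneg : ∀ (σ : V → ℤ), Function.Injective σ → Function.Injective (-σ) := by
    intro σ hσ a b hab
    apply hσ
    have h : -(σ a) = -(σ b) := hab
    omega
  have pair : ∀ σ : V → ℤ, Function.Injective σ → ∀ f : V → ℤ,
      degPlus (D - nuDiv G σ + lapDiv G f)
        = degPlus ((K - D) - nuDiv G (-σ) + lapDiv G (-f)) + c := by
    intro σ hσ f
    have hrev := nu_add_rev G hσ
    have hK2 : K - nuDiv G (-σ) = nuDiv G σ := by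
      rw [hK, ← hrev]; abel
    have hneg : (K - D) - nuDiv G (-σ) + lapDiv G (-f)
        = -(D - nuDiv G σ + lapDiv G f) := by
      rw [lap_neg, show (K - D) - nuDiv G (-σ) + -lapDiv G f
        = (K - nuDiv G (-σ)) - D - lapDiv G f by abel, hK2]
      abel
    rw [hneg]
    have h1 := degPlus_sub_neg (D - nuDiv G σ + lapDiv G f)
    have h2 : degDiv (D - nuDiv G σ + lapDiv G f) = c := by
      rw [degDiv_add, degDiv_sub, degDiv_lap, degDiv_nu G hσ, hc, hm, hn]
      ring
    omega
  have hTd : sInf (TSet G D) = sInf (TSet G (K - D)) + c := by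
    have hmem1 := Int.csInf_mem (TSet_nonempty G D) (TSet_bdd G D)
    have hmem2 := Int.csInf_mem (TSet_nonempty G (K - D)) (TSet_bdd G (K - D))
    apply le_antisymm
    · obtain ⟨σ, hσ, f, hx⟩ := hmem2
      have hp := pair (-σ) (hσneg σ hσ) (-f)
      rw [neg_neg, neg_neg] at hp
      have hmemD : degPlus (D - nuDiv G (-σ) + lapDiv G (-f)) ∈ TSet G D :=
        ⟨-σ, hσneg σ hσ, -f, rfl⟩
      calc sInf (TSet G D) ≤ _ := csInf_le (TSet_bdd G D) hmemD
        _ = sInf (TSet G (K - D)) + c := by rw [hp, ← hx]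
    · obtain ⟨σ, hσ, f, hx⟩ := hmem1
      have hp := pair σ hσ f
      have hmemK : degPlus ((K - D) - nuDiv G (-σ) + lapDiv G (-f)) ∈ TSet G (K - D) :=
        ⟨-σ, hσneg σ hσ, -f, rfl⟩
      have h5 := csInf_le (TSet_bdd G (K - D)) hmemK
      omega
  have e1 := divRank_add_one G hG D
  have e2 := divRank_add_one G hG (K - D)
  omega

end Final
end
end

section
/- For a prime p, the graph on the multiplicative group (ℤ/pℤ)* in which distinct units u and v are adjacent if and only if v = u² or u = v² is connected if and only if p = 2 or p is a Fermat prime, i.e., p = 2^(2^k) + 1 for some integer k ≥ 0. -/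
/-!
The squaring graph on `(ℤ/pℤ)ˣ` (distinct units `u, v` adjacent iff `v = u²` or `u = v²`)
is connected iff `p = 2` or `p` is a Fermat prime.
-/

/-- The graph on the group of units of `ℤ/pℤ` in which two distinct units `u, v` are adjacent
if and only if `v = u²` or `u = v²`. -/
def squareGraph (p : ℕ) : SimpleGraph (ZMod p)ˣ :=
  SimpleGraph.fromRel (fun u v => v = u ^ 2)

lemma squareGraph_adj {p : ℕ} {u v : (ZMod p)ˣ} :
    (squareGraph p).Adj u v ↔ u ≠ v ∧ (v = u ^ 2 ∨ u = v ^ 2) := by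
  simp [squareGraph, SimpleGraph.fromRel_adj]

lemma reachable_sq {p : ℕ} (u : (ZMod p)ˣ) : (squareGraph p).Reachable u (u ^ 2) := by
  by_cases h : u = u ^ 2
  · rw [← h]
  · exact (squareGraph_adj.mpr ⟨h, Or.inl rfl⟩).reachable

lemma reachable_pow_pow {p : ℕ} (u : (ZMod p)ˣ) (n : ℕ) :
    (squareGraph p).Reachable u (u ^ 2 ^ n) := by
  induction n with
  | zero => simpa using SimpleGraph.Reachable.refl u
  | succ n ih =>
      have : u ^ 2 ^ (n + 1) = (u ^ 2 ^ n) ^ 2 := by rw [← pow_mul, pow_succ]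
      rw [this]
      exact ih.trans (reachable_sq _)

lemma order_two_pow_of_adj {p : ℕ} {u v : (ZMod p)ˣ}
    (h : (squareGraph p).Adj u v) (hu : ∃ k, orderOf u = 2 ^ k) :
    ∃ k, orderOf v = 2 ^ k := by
  obtain ⟨k, hk⟩ := hu
  rcases (squareGraph_adj.mp h).2 with h2 | h2
  · subst h2
    have : orderOf (u ^ 2) ∣ 2 ^ k := hk ▸ orderOf_pow_dvd 2
    obtain ⟨j, _, hj⟩ := (Nat.dvd_prime_pow Nat.prime_two).mp this
    exact ⟨j, hj⟩
  · have hdvd : orderOf v ∣ 2 ^ (k + 1) := by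
      apply orderOf_dvd_of_pow_eq_one
      have : (v ^ 2) ^ 2 ^ k = 1 := by rw [← h2, ← hk, pow_orderOf_eq_one]
      rw [pow_succ, pow_mul']
      exact this
    obtain ⟨j, _, hj⟩ := (Nat.dvd_prime_pow Nat.prime_two).mp hdvd
    exact ⟨j, hj⟩

lemma order_two_pow_of_walk {p : ℕ} {u v : (ZMod p)ˣ}
    (w : (squareGraph p).Walk u v) (hu : ∃ k, orderOf u = 2 ^ k) :
    ∃ k, orderOf v = 2 ^ k := by
  induction w with
  | nil => exact hu
  | cons h _ ih => exact ih (order_two_pow_of_adj h hu)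

/-- If `2^a + 1` is prime and `a ≥ 1`, then `a` is a power of `2`. -/
lemma pow_of_two_pow_add_one_prime {a : ℕ} (ha : 1 ≤ a) (hp : (2 ^ a + 1).Prime) :
    ∃ k, a = 2 ^ k := by
  rcases Nat.eq_two_pow_or_exists_odd_prime_and_dvd a with h | ⟨q, hq, ⟨b, hb⟩, hodd⟩
  · exact h
  · exfalso
    have hq2 : 2 ≤ q := hq.two_le
    have hb0 : 0 < b := by
      rcases Nat.eq_zero_or_pos b with h0 | h0
      · subst h0; simp at hb; omega
      · exact h0
    have hdvd : 2 ^ b + 1 ∣ 2 ^ a + 1 := by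
      have := Odd.nat_add_dvd_pow_add_pow (2 ^ b) 1 hodd
      simpa [hb, ← pow_mul, mul_comm] using this
    have hlt : b < a := by
      rw [hb]
      calc b = 1 * b := (one_mul b).symm
      _ < q * b := (Nat.mul_lt_mul_right hb0).mpr hq.one_lt
    have h1 : 2 ^ b + 1 ≠ 1 := by
      have : 0 < 2 ^ b := pow_pos (by norm_num) b
      omega
    have h2 : 2 ^ b + 1 ≠ 2 ^ a + 1 := by
      have := Nat.pow_lt_pow_right (by norm_num : 1 < 2) hlt
      omega
    rcases (Nat.Prime.eq_one_or_self_of_dvd hp _ hdvd) with h | h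
    · exact h1 h
    · exact h2 h

/-- For a prime `p`, the squaring graph on `(ℤ/pℤ)ˣ` is connected if and only if `p = 2` or
`p` is a Fermat prime, i.e. `p = 2^(2^k) + 1` for some `k ≥ 0`. -/
theorem squareGraph_connected_iff_fermat (p : ℕ) (hp : p.Prime) :
    (squareGraph p).Connected ↔ p = 2 ∨ ∃ k : ℕ, p = 2 ^ 2 ^ k + 1 := by
  haveI : Fact p.Prime := ⟨hp⟩
  constructor
  · intro hc
    -- every unit has 2-power order
    have hall : ∀ v : (ZMod p)ˣ, ∃ k, orderOf v = 2 ^ k := by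
      intro v
      obtain ⟨w⟩ := hc.preconnected 1 v
      exact order_two_pow_of_walk w ⟨0, by simp⟩
    -- hence the card is a power of 2
    have hcard : Fintype.card (ZMod p)ˣ = p - 1 := ZMod.card_units p
    have hne : p - 1 ≠ 0 := by have := hp.two_le; omega
    have h2pow : ∃ a, p - 1 = 2 ^ a := by
      rcases Nat.eq_two_pow_or_exists_odd_prime_and_dvd (p - 1) with h | ⟨q, hq, hdvd, hodd⟩
      · exact h
      · exfalso
        haveI : Fact q.Prime := ⟨hq⟩
        obtain ⟨g, hg⟩ := exists_prime_orderOf_dvd_card q (hcard ▸ hdvd)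
        obtain ⟨k, hk⟩ := hall g
        rw [hg] at hk
        rcases k with _ | k
        · simp at hk; exact hq.one_lt.ne' hk
        · have h2d : 2 ∣ q := hk ▸ dvd_pow_self 2 (Nat.succ_ne_zero k)
          rcases hodd with ⟨m, hm⟩
          omega
    obtain ⟨a, ha⟩ := h2pow
    rcases Nat.eq_zero_or_pos a with h0 | h0
    · left; subst h0; simp at ha; omega
    · right
      have hpa : p = 2 ^ a + 1 := by have := hp.two_le; omega
      obtain ⟨k, hk⟩ := pow_of_two_pow_add_one_prime h0 (hpa ▸ hp)
      exact ⟨k, by rw [hpa, hk]⟩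
  · intro h
    -- in both cases p - 1 is a power of 2
    have h2pow : ∃ a, p - 1 = 2 ^ a := by
      rcases h with h | ⟨k, hk⟩
      · exact ⟨0, by simp [h]⟩
      · exact ⟨2 ^ k, by rw [hk]; simp⟩
    obtain ⟨a, ha⟩ := h2pow
    have hcard : Fintype.card (ZMod p)ˣ = 2 ^ a := by rw [ZMod.card_units p, ha]
    haveI : Nonempty (ZMod p)ˣ := ⟨1⟩
    refine ⟨fun u v => ?_⟩
    have hu : u ^ 2 ^ a = 1 := by rw [← hcard, pow_card_eq_one]
    have hv : v ^ 2 ^ a = 1 := by rw [← hcard, pow_card_eq_one]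
    have r1 : (squareGraph p).Reachable u 1 := hu ▸ reachable_pow_pow u a
    have r2 : (squareGraph p).Reachable v 1 := hv ▸ reachable_pow_pow v a
    exact r1.trans r2.symm
end

section
/- For a prime p, the graph on the multiplicative group (ℤ/pℤ)* in which distinct units u and v are adjacent if and only if v = u², u = v², v = u³, or u = v³ is connected if and only if p is a Pierpont prime, i.e., p − 1 = 2^a · 3^b for some integers a, b ≥ 0. -/
/-!
The square-and-cube graph on `(ℤ/pℤ)ˣ` (distinct units `u, v` adjacent iff `v = u²`, `u = v²`,
`v = u³` or `u = v³`) is connected iff `p` is a Pierpont prime.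
-/

/-- The graph on the group of units of `ℤ/pℤ` in which two distinct units `u, v` are adjacent
if and only if `v = u²`, `u = v²`, `v = u³` or `u = v³`. -/
def squareCubeGraph (p : ℕ) : SimpleGraph (ZMod p)ˣ :=
  SimpleGraph.fromRel (fun u v => v = u ^ 2 ∨ v = u ^ 3)

private lemma eq_one_of_pow_coprime {G : Type*} [Group G] (x : G) {k q : ℕ}
    (hk : x ^ k = 1) (hq : x ^ q = 1) (h : Nat.Coprime k q) : x = 1 := by
  have h1 : orderOf x ∣ k := orderOf_dvd_of_pow_eq_one hk
  have h2 : orderOf x ∣ q := orderOf_dvd_of_pow_eq_one hq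
  have : orderOf x ∣ 1 := h ▸ Nat.dvd_gcd h1 h2
  exact orderOf_eq_one_iff.mp (Nat.dvd_one.mp this)

private lemma only_two_three (n : ℕ) (hn : 0 < n)
    (h : ∀ q, Nat.Prime q → q ∣ n → q = 2 ∨ q = 3) : ∃ a b : ℕ, n = 2 ^ a * 3 ^ b := by
  induction n using Nat.strong_induction_on with
  | _ n ih =>
    rcases eq_or_ne n 1 with rfl | hne
    · exact ⟨0, 0, rfl⟩
    · have hq := Nat.minFac_prime hne
      have hdvd := Nat.minFac_dvd n
      have hlt : n / n.minFac < n := Nat.div_lt_self hn hq.one_lt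
      have hpos : 0 < n / n.minFac := Nat.div_pos (Nat.minFac_le hn) hq.pos
      obtain ⟨a, b, hab⟩ := ih _ hlt hpos (fun q hq' hd =>
        h q hq' (hd.trans (Nat.div_dvd_of_dvd hdvd)))
      have hn' : n = n.minFac * (n / n.minFac) := (Nat.mul_div_cancel' hdvd).symm
      rcases h _ hq hdvd with h2 | h3
      · exact ⟨a + 1, b, by rw [hn', hab, h2]; ring⟩
      · exact ⟨a, b + 1, by rw [hn', hab, h3]; ring⟩

/-- For a prime `p`, the square-and-cube graph on `(ℤ/pℤ)ˣ` is connected if and only if `p`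
is a Pierpont prime, i.e. `p - 1 = 2^a · 3^b` for some `a, b ≥ 0`. -/
theorem squareCubeGraph_connected_iff_pierpont (p : ℕ) (hp : p.Prime) :
    (squareCubeGraph p).Connected ↔ ∃ a b : ℕ, p - 1 = 2 ^ a * 3 ^ b := by
  haveI : Fact p.Prime := ⟨hp⟩
  constructor
  · intro hconn
    have hp1 : 0 < p - 1 := by have := hp.two_le; omega
    apply only_two_three _ hp1
    intro q hq hdvd
    by_contra hne
    push_neg at hne
    obtain ⟨hq2, hq3⟩ := hne
    set m : ℕ := (p - 1) / q with hm
    have hmq : m * q = p - 1 := Nat.div_mul_cancel hdvd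
    -- along any edge, x^m = 1 is preserved
    have keypow : ∀ (x : (ZMod p)ˣ) (k : ℕ), Nat.Coprime k q → (x ^ k) ^ m = 1 → x ^ m = 1 := by
      intro x k hco hxk
      have h1 : (x ^ m) ^ k = 1 := by
        rw [← pow_mul, mul_comm, pow_mul]; exact hxk
      have h2 : (x ^ m) ^ q = 1 := by
        rw [← pow_mul, hmq]; exact ZMod.units_pow_card_sub_one_eq_one p x
      exact eq_one_of_pow_coprime _ h1 h2 hco
    have co2 : Nat.Coprime 2 q := (Nat.coprime_primes Nat.prime_two hq).mpr fun h => hq2 h.symm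
    have co3 : Nat.Coprime 3 q := (Nat.coprime_primes Nat.prime_three hq).mpr fun h => hq3 h.symm
    have step : ∀ {u v : (ZMod p)ˣ}, (squareCubeGraph p).Adj u v → u ^ m = 1 → v ^ m = 1 := by
      intro u v hadj hu
      rw [squareCubeGraph, SimpleGraph.fromRel_adj] at hadj
      rcases hadj.2 with (h | h) | (h | h)
      · rw [h, ← pow_mul, mul_comm, pow_mul, hu, one_pow]
      · rw [h, ← pow_mul, mul_comm, pow_mul, hu, one_pow]
      · exact keypow v 2 co2 (h ▸ hu)
      · exact keypow v 3 co3 (h ▸ hu)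
    have walkkey : ∀ {u v : (ZMod p)ˣ}, (squareCubeGraph p).Walk u v → u ^ m = 1 → v ^ m = 1 := by
      intro u v w
      induction w with
      | nil => exact id
      | cons h _ ih => exact fun hu => ih (step h hu)
    obtain ⟨g, hg⟩ := IsCyclic.exists_generator (α := (ZMod p)ˣ)
    have hordg : orderOf g = p - 1 := by
      rw [orderOf_eq_card_of_forall_mem_zpowers hg, Nat.card_eq_fintype_card, ZMod.card_units p]
    have hgm : g ^ m = 1 := walkkey (hconn 1 g).some (one_pow m)
    have : p - 1 ∣ m := hordg ▸ orderOf_dvd_of_pow_eq_one hgm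
    have hmlt : m < p - 1 := Nat.div_lt_self hp1 hq.one_lt
    have hmpos : 0 < m := Nat.div_pos (Nat.le_of_dvd hp1 hdvd) hq.pos
    have := Nat.le_of_dvd hmpos this
    omega
  · rintro ⟨a, b, hab⟩
    have reach_sq : ∀ u : (ZMod p)ˣ, (squareCubeGraph p).Reachable u (u ^ 2) := by
      intro u
      by_cases h : u ^ 2 = u
      · rw [h]
      · exact SimpleGraph.Adj.reachable (by
          rw [squareCubeGraph, SimpleGraph.fromRel_adj]
          exact ⟨fun he => h he.symm, Or.inl (Or.inl rfl)⟩)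
    have reach_cb : ∀ u : (ZMod p)ˣ, (squareCubeGraph p).Reachable u (u ^ 3) := by
      intro u
      by_cases h : u ^ 3 = u
      · rw [h]
      · exact SimpleGraph.Adj.reachable (by
          rw [squareCubeGraph, SimpleGraph.fromRel_adj]
          exact ⟨fun he => h he.symm, Or.inl (Or.inr rfl)⟩)
    have reach2 : ∀ (u : (ZMod p)ˣ) (n : ℕ), (squareCubeGraph p).Reachable u (u ^ 2 ^ n) := by
      intro u n
      induction n with
      | zero => rw [pow_zero, pow_one]
      | succ n ih =>
        refine ih.trans ?_
        rw [pow_succ, pow_mul]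
        exact reach_sq _
    have reach3 : ∀ (u : (ZMod p)ˣ) (n : ℕ), (squareCubeGraph p).Reachable u (u ^ 3 ^ n) := by
      intro u n
      induction n with
      | zero => rw [pow_zero, pow_one]
      | succ n ih =>
        refine ih.trans ?_
        rw [pow_succ, pow_mul]
        exact reach_cb _
    have reach1 : ∀ u : (ZMod p)ˣ, (squareCubeGraph p).Reachable u 1 := by
      intro u
      have : u ^ (2 ^ a * 3 ^ b) = 1 := by
        rw [← hab]; exact ZMod.units_pow_card_sub_one_eq_one p u
      have h2 : (u ^ 2 ^ a) ^ 3 ^ b = 1 := by rw [← pow_mul, ← hab]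
                                              exact ZMod.units_pow_card_sub_one_eq_one p u
      exact (reach2 u a).trans (h2 ▸ reach3 (u ^ 2 ^ a) b)
    exact ⟨fun u v => (reach1 u).trans (reach1 v).symm⟩
end

section
/- For every prime p and every a ∈ ℤ/pℤ, the graph on ℤ/pℤ in which distinct elements x and y are adjacent if and only if y = x² + a or x = y² + a has at most two triangles: the number of three-element cliques is 0, 1 or 2. -/
/-!
For every prime `p` and `a ∈ ℤ/pℤ`, the quadratic orbital graph (distinct `x, y` adjacent iff
`y = x² + a` or `x = y² + a`) has zero, one or two triangles.
-/

/-- The quadratic orbital graph on `ℤ/pℤ`: two distinct vertices `x, y` are adjacent if and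
only if `y = x² + a` or `x = y² + a`. -/
def quadGraph (p : ℕ) (a : ZMod p) : SimpleGraph (ZMod p) :=
  SimpleGraph.fromRel (fun x y => y = x ^ 2 + a)

namespace QuadAux

def f {p : ℕ} (a : ZMod p) (x : ZMod p) : ZMod p := x ^ 2 + a

variable {p : ℕ} {a : ZMod p}

lemma triangle_struct (s : Finset (ZMod p)) (h : (quadGraph p a).IsNClique 3 s) :
    ∃ x : ZMod p, f a (f a (f a x)) = x ∧ s = {x, f a x, f a (f a x)} := by
  obtain ⟨x, y, z, hxy, hxz, hyz, rfl⟩ := Finset.card_eq_three.mp h.card_eq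
  have hc := h.isClique
  have h1 : (quadGraph p a).Adj x y := hc (by simp) (by simp) hxy
  have h2 : (quadGraph p a).Adj y z := hc (by simp) (by simp) hyz
  have h3 : (quadGraph p a).Adj x z := hc (by simp) (by simp) hxz
  simp only [quadGraph, SimpleGraph.fromRel_adj] at h1 h2 h3
  obtain ⟨-, h1 | h1⟩ := h1 <;> obtain ⟨-, h2 | h2⟩ := h2 <;> obtain ⟨-, h3 | h3⟩ := h3
  · exact absurd (h1.trans h3.symm) hyz
  · subst h1; subst h2; exact ⟨x, h3.symm, rfl⟩
  · exact absurd (h3.trans h1.symm) (Ne.symm hyz)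
  · exact absurd (h3.trans h2.symm) hxy
  · exact absurd (h1.trans h2.symm) hxz  -- x=fy, z=fy ⇒ x=z
  · exact absurd (h1.trans h2.symm) hxz
  · subst h3; subst h2
    exact ⟨x, h1.symm, congrArg (insert x) (Finset.pair_comm _ _)⟩
  · exact absurd (h3.trans h2.symm) hxy

lemma cycle_shift {x u : ZMod p} (hx : f a (f a (f a x)) = x)
    (hu : u ∈ ({x, f a x, f a (f a x)} : Finset (ZMod p))) :
    f a (f a (f a u)) = u ∧
      ({u, f a u, f a (f a u)} : Finset (ZMod p)) = {x, f a x, f a (f a x)} := by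
  simp only [Finset.mem_insert, Finset.mem_singleton] at hu
  rcases hu with rfl | rfl | rfl
  · exact ⟨hx, rfl⟩
  · refine ⟨congrArg (f a) hx, ?_⟩
    ext t; simp only [Finset.mem_insert, Finset.mem_singleton, hx]; tauto
  · refine ⟨congrArg (fun t => f a (f a t)) hx, ?_⟩
    ext t; simp only [Finset.mem_insert, Finset.mem_singleton, hx]; tauto

lemma triangle_eq_of_mem {s t : Finset (ZMod p)} (hs : (quadGraph p a).IsNClique 3 s)
    (ht : (quadGraph p a).IsNClique 3 t) {u : ZMod p} (hus : u ∈ s) (hut : u ∈ t) : s = t := by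
  obtain ⟨x, hx, rfl⟩ := triangle_struct _ hs
  obtain ⟨y, hy, rfl⟩ := triangle_struct _ ht
  rw [← (cycle_shift hx hus).2, ← (cycle_shift hy hut).2]

end QuadAux

/-- For every prime `p` and every `a ∈ ℤ/pℤ`, the quadratic orbital graph has at most two
triangles: the number of three-element cliques is `0`, `1` or `2`. -/
theorem quadGraph_triangles (p : ℕ) (hp : p.Prime) (a : ZMod p) :
    Nat.card {s : Finset (ZMod p) // (quadGraph p a).IsNClique 3 s} = 0 ∨
      Nat.card {s : Finset (ZMod p) // (quadGraph p a).IsNClique 3 s} = 1 ∨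
      Nat.card {s : Finset (ZMod p) // (quadGraph p a).IsNClique 3 s} = 2 := by
  classical
  haveI : Fact p.Prime := ⟨hp⟩
  haveI : NeZero p := ⟨hp.ne_zero⟩
  set P : Polynomial (ZMod p) :=
    ((Polynomial.X ^ 2 + Polynomial.C a) ^ 2 + Polynomial.C a) ^ 2 + Polynomial.C a
      - Polynomial.X with hP
  have hdeg : P.natDegree = 8 := by rw [hP]; compute_degree!
  have hP0 : P ≠ 0 := fun h => by simp [h] at hdeg
  set R := P.roots.toFinset with hR
  have hRcard : R.card ≤ 8 := by
    calc R.card ≤ Multiset.card P.roots := P.roots.toFinset_card_le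
      _ ≤ P.natDegree := P.card_roots'
      _ = 8 := hdeg
  have hsub : ∀ s : Finset (ZMod p), (quadGraph p a).IsNClique 3 s → s ⊆ R := by
    intro s hs u hu
    obtain ⟨x, hx, rfl⟩ := QuadAux.triangle_struct _ hs
    have h3 := (QuadAux.cycle_shift hx hu).1
    have hev : P.eval u = 0 := by
      simp only [hP, Polynomial.eval_sub, Polynomial.eval_add, Polynomial.eval_pow,
        Polynomial.eval_X, Polynomial.eval_C]
      rw [sub_eq_zero]
      simpa [QuadAux.f] using h3
    simp [hR, Polynomial.mem_roots, hP0, hev]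
  set T : Finset (Finset (ZMod p)) :=
    Finset.univ.filter (fun s => (quadGraph p a).IsNClique 3 s) with hT
  have hcardT : Nat.card {s : Finset (ZMod p) // (quadGraph p a).IsNClique 3 s} = T.card := by
    rw [Nat.card_eq_fintype_card, Fintype.card_subtype]
  have hdisj : ∀ s ∈ T, ∀ t ∈ T, s ≠ t → Disjoint (id s) (id t) := by
    intro s hs t ht hne
    simp only [hT, Finset.mem_filter] at hs ht
    rw [Finset.disjoint_left]
    intro u hus hut
    exact hne (QuadAux.triangle_eq_of_mem hs.2 ht.2 hus hut)
  have key : 3 * T.card ≤ 8 := by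
    have h1 : (T.biUnion id).card = ∑ s ∈ T, (id s).card := Finset.card_biUnion hdisj
    have h2 : ∑ s ∈ T, (id s).card = 3 * T.card := by
      rw [Finset.sum_congr rfl (fun s hs => ((Finset.mem_filter.mp hs).2.card_eq))]
      simp [mul_comm]
    have h3 : T.biUnion id ⊆ R := by
      intro u hu
      obtain ⟨s, hs, hus⟩ := Finset.mem_biUnion.mp hu
      exact hsub s (Finset.mem_filter.mp hs).2 hus
    calc 3 * T.card = (T.biUnion id).card := by rw [h1, h2]
      _ ≤ R.card := Finset.card_le_card h3
      _ ≤ 8 := hRcard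
  rw [hcardT]
  omega
end
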